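/- arXiv:1402.5537 — 6 statements merged into one kernel-verified Lean document; each statement's English description precedes it below -/
import Mathlib

section
/- Let T be a closed, symmetric, G-invariant operator with equal deficiency indices, and let K : N₊ → N₋ be a unitary defining the self-adjoint extension T_K via von Neumann's theorem (D(T_K) = D(T) ⊕ (I + K)N₊, T_K = T† restricted to this domain). If V(g)Kξ = K V(g)ξ for all ξ ∈ N₊ and g ∈ G, then T_K is G-invariant. -/
open scoped InnerProductSpace
open LinearPMap

/-- `G`-invariance of a (possibly unbounded) operator `T` with respect to a unitary
representation `V`. -/
def GInvariant {H : Type*} [NormedAddCommGroup H] [InnerProductSpace ℂ H]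
    {G : Type*} [Group G] (V : G →* (H ≃ₗᵢ[ℂ] H)) (T : H →ₗ.[ℂ] H) : Prop :=
  ∀ g : G, ∀ x : T.domain, ∃ hx : V g (x : H) ∈ T.domain,
    T ⟨V g (x : H), hx⟩ = V g (T x)

/-- The deficiency space `ker (T† - c)` of an unbounded operator, as a set. -/
def deficiencySpace {H : Type*} [NormedAddCommGroup H] [InnerProductSpace ℂ H]
    [CompleteSpace H] (T : H →ₗ.[ℂ] H) (c : ℂ) : Set H :=
  {φ : H | ∃ hφ : φ ∈ T.adjoint.domain, T.adjoint ⟨φ, hφ⟩ = c • φ}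

/-- If `T` is densely defined and `G`-invariant, then its adjoint commutes with `V`. -/
lemma adjoint_GInvariant_aux {H : Type*} [NormedAddCommGroup H] [InnerProductSpace ℂ H]
    [CompleteSpace H] {G : Type*} [Group G] (V : G →* (H ≃ₗᵢ[ℂ] H)) (T : H →ₗ.[ℂ] H)
    (hdense : Dense (T.domain : Set H)) (hinv : GInvariant V T) (g : G)
    (y : T.adjoint.domain) :
    ∃ hy : V g (y : H) ∈ T.adjoint.domain,
      T.adjoint ⟨V g (y : H), hy⟩ = V g (T.adjoint y) := by
  have key : ∀ x : T.domain, ⟪V g (T.adjoint y), (x : H)⟫_ℂ = ⟪V g (y : H), T x⟫_ℂ := by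
    intro x
    obtain ⟨hx', hx'val⟩ := hinv g⁻¹ x
    have hVg : ∀ z : H, V g (V g⁻¹ z) = z := by
      intro z
      have : V g (V g⁻¹ z) = (V g * V g⁻¹) z := rfl
      rw [this, ← map_mul, mul_inv_cancel, map_one]; rfl
    calc ⟪V g (T.adjoint y), (x : H)⟫_ℂ
        = ⟪V g (T.adjoint y), V g (V g⁻¹ (x : H))⟫_ℂ := by rw [hVg]
      _ = ⟪T.adjoint y, V g⁻¹ (x : H)⟫_ℂ := (V g).inner_map_map _ _
      _ = ⟪T.adjoint y, ((⟨V g⁻¹ (x : H), hx'⟩ : T.domain) : H)⟫_ℂ := rfl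
      _ = ⟪(y : H), T ⟨V g⁻¹ (x : H), hx'⟩⟫_ℂ :=
            T.adjoint_isFormalAdjoint hdense y ⟨V g⁻¹ (x : H), hx'⟩
      _ = ⟪(y : H), V g⁻¹ (T x)⟫_ℂ := by rw [hx'val]
      _ = ⟪V g (y : H), V g (V g⁻¹ (T x))⟫_ℂ := ((V g).inner_map_map _ _).symm
      _ = ⟪V g (y : H), T x⟫_ℂ := by rw [hVg]
  have hy : V g (y : H) ∈ T.adjoint.domain :=
    T.mem_adjoint_domain_of_exists _ ⟨V g (T.adjoint y), key⟩
  exact ⟨hy, LinearPMap.adjoint_apply_eq hdense ⟨V g (y : H), hy⟩ key⟩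

/-- Von Neumann theory: let `T` be closed, symmetric and `G`-invariant, let
`K : N₊ → N₋` be a unitary between the deficiency spaces and `T_K` the corresponding
self-adjoint extension (the restriction of `T†` to `D(T) + (I + K) N₊`).  If `K`
commutes with the representation `V`, then `T_K` is `G`-invariant. -/
theorem vonNeumann_extension_GInvariant {H : Type*} [NormedAddCommGroup H]
    [InnerProductSpace ℂ H] [CompleteSpace H] {G : Type*} [Group G]
    (V : G →* (H ≃ₗᵢ[ℂ] H)) (T : H →ₗ.[ℂ] H)
    (hdense : Dense (T.domain : Set H)) (hclosed : T.IsClosed)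
    (hsymm : ∀ x y : T.domain, ⟪T x, (y : H)⟫_ℂ = ⟪(x : H), T y⟫_ℂ)
    (hinv : GInvariant V T)
    (Np Nm : Submodule ℂ H)
    (hNp : (Np : Set H) = deficiencySpace T Complex.I)
    (hNm : (Nm : Set H) = deficiencySpace T (-Complex.I))
    (K : Np ≃ₗᵢ[ℂ] Nm)
    (TK : H →ₗ.[ℂ] H)
    -- `D(T_K) = {φ + ξ + Kξ : φ ∈ D(T), ξ ∈ N₊}`
    (hTKdom : ∀ x : H, x ∈ TK.domain ↔
      ∃ φ ∈ T.domain, ∃ ξ : Np, x = φ + (ξ : H) + (K ξ : H))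
    -- `T_K` is the restriction of `T†` to this domain
    (hTKval : ∀ x : TK.domain, ∃ hx : (x : H) ∈ T.adjoint.domain,
      TK x = T.adjoint ⟨(x : H), hx⟩)
    -- `K` commutes with the representation `V`
    (hcomm : ∀ g : G, ∀ ξ : Np, ∃ hξ : V g (ξ : H) ∈ Np,
      V g (K ξ : H) = (K ⟨V g (ξ : H), hξ⟩ : H)) :
    GInvariant V TK := by
  intro g x
  obtain ⟨φ, hφ, ξ, hxeq⟩ := (hTKdom (x : H)).mp x.2
  obtain ⟨hφ', _⟩ := hinv g ⟨φ, hφ⟩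
  obtain ⟨hξ', hKξ'⟩ := hcomm g ξ
  have hmem : V g (x : H) ∈ TK.domain := by
    rw [hTKdom]
    refine ⟨V g φ, hφ', ⟨V g (ξ : H), hξ'⟩, ?_⟩
    rw [hxeq]
    rw [_root_.map_add, _root_.map_add, hKξ']
  refine ⟨hmem, ?_⟩
  obtain ⟨hx1, hval1⟩ := hTKval x
  obtain ⟨hx2, hval2⟩ := hTKval ⟨V g (x : H), hmem⟩
  obtain ⟨hy, hval3⟩ := adjoint_GInvariant_aux V T hdense hinv g ⟨(x : H), hx1⟩
  rw [hval1, hval2, ← hval3]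
end

section
/- Let Q be a Hermitean, closed, semi-bounded quadratic form with dense domain D ⊆ H, represented by the self-adjoint semi-bounded operator T (via the representation theorem: Q(φ,ψ) = ⟨φ, Tψ⟩ for φ ∈ D, ψ ∈ D(T)). If Q is G-invariant (V(g)D ⊆ D and Q(V(g)φ) = Q(φ) for all φ ∈ D, g ∈ G), then T is G-invariant. -/
open scoped InnerProductSpace
open LinearPMap

lemma sesq_polar {E : Type*} [AddCommGroup E] [Module ℂ E]
    (B : E →ₗ⋆[ℂ] E →ₗ[ℂ] ℂ) (x y : E) :
    B x y = (B (x+y) (x+y) - B (x-y) (x-y)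
      - Complex.I * B (x + Complex.I • y) (x + Complex.I • y)
      + Complex.I * B (x - Complex.I • y) (x - Complex.I • y)) / 4 := by
  simp only [_root_.map_add, _root_.map_sub, MulActionSemiHomClass.map_smulₛₗ, LinearMap.add_apply, LinearMap.sub_apply,
    LinearMap.smul_apply, smul_eq_mul, Complex.conj_I, _root_.map_smul, RingHom.id_apply]
  have h := Complex.I_sq
  ring_nf
  linear_combination (1/2 : ℂ) * (B x y - B y x) * h

/-- The graph norm `‖φ‖_Q = √(Q(φ,φ) + (1+m)‖φ‖²)` of a quadratic form. -/
noncomputable def qNorm {H : Type*} [NormedAddCommGroup H] [InnerProductSpace ℂ H]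
    {D : Submodule ℂ H} (m : ℝ) (Q : D →ₗ⋆[ℂ] D →ₗ[ℂ] ℂ) (φ : D) : ℝ :=
  Real.sqrt ((Q φ φ).re + (1 + m) * ‖(φ : H)‖ ^ 2)

/-- If a Hermitean, closed, semi-bounded quadratic form `Q` is `G`-invariant, then the
self-adjoint operator `T` representing it is `G`-invariant. -/
theorem representing_operator_GInvariant {H : Type*} [NormedAddCommGroup H]
    [InnerProductSpace ℂ H] [CompleteSpace H] {G : Type*} [Group G]
    (V : G →* (H ≃ₗᵢ[ℂ] H)) (D : Submodule ℂ H) (hD : Dense (D : Set H))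
    (Q : D →ₗ⋆[ℂ] D →ₗ[ℂ] ℂ)
    -- `Q` is Hermitean
    (hherm : ∀ φ ψ : D, Q φ ψ = starRingEnd ℂ (Q ψ φ))
    -- `Q` is semi-bounded from below with bound `m ≥ 0`
    (m : ℝ) (hm : 0 ≤ m)
    (hbound : ∀ φ : D, (Q φ φ).re ≥ -m * ‖(φ : H)‖ ^ 2)
    -- `Q` is closed: every `‖·‖_Q`-Cauchy sequence in `D` converges in `‖·‖_Q` to a point of `D`
    (hclosed : ∀ f : ℕ → D,
      (∀ ε > 0, ∃ N, ∀ p ≥ N, ∀ q ≥ N, qNorm m Q (f p - f q) < ε) →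
      ∃ φ : D, Filter.Tendsto (fun n => qNorm m Q (f n - φ)) Filter.atTop (nhds 0))
    -- `T` is the self-adjoint operator representing `Q`
    (T : H →ₗ.[ℂ] H)
    (hTD : T.domain ≤ D)
    (hrep : ∀ ψ : T.domain, ∀ φ : D, Q φ ⟨(ψ : H), hTD ψ.2⟩ = ⟪(φ : H), T ψ⟫_ℂ)
    (hmax : ∀ ψ : D, (∃ χ : H, ∀ φ : D, Q φ ψ = ⟪(φ : H), χ⟫_ℂ) → (ψ : H) ∈ T.domain)
    -- `Q` is `G`-invariant
    (hVD : ∀ (g : G) (φ : D), V g (φ : H) ∈ D)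
    (hQinv : ∀ (g : G) (φ : D),
      Q ⟨V g (φ : H), hVD g φ⟩ ⟨V g (φ : H), hVD g φ⟩ = Q φ φ) :
    GInvariant V T := by
  -- the action of `V g` on `D`, as a linear map `D →ₗ[ℂ] D`
  have hv : ∀ g : G, ∃ v : D →ₗ[ℂ] D, ∀ φ : D, (v φ : H) = V g (φ : H) := by
    intro g
    refine ⟨{ toFun := fun φ => ⟨V g (φ : H), hVD g φ⟩,
              map_add' := fun φ ψ => by ext; simp,
              map_smul' := fun c φ => by ext; simp }, fun φ => rfl⟩
  intro g ψ
  obtain ⟨v, hvc⟩ := hv g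
  obtain ⟨w, hwc⟩ := hv g⁻¹
  -- `v ∘ w = id`
  have hvw : ∀ φ : D, v (w φ) = φ := by
    intro φ
    apply Subtype.ext
    rw [hvc, hwc, ← LinearIsometryEquiv.coe_toLinearEquiv, ← LinearIsometryEquiv.coe_toLinearEquiv,
      ← LinearEquiv.trans_apply]
    have : (V g⁻¹).toLinearEquiv ≪≫ₗ (V g).toLinearEquiv = (V (g * g⁻¹)).toLinearEquiv := by
      rw [map_mul]; rfl
    rw [this, mul_inv_cancel, map_one]; rfl
  -- `Q` is invariant off the diagonal, by polarization
  have hQinv2 : ∀ φ χ : D, Q (v φ) (v χ) = Q φ χ := by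
    intro φ χ
    have hdiag : ∀ ξ : D, Q (v ξ) (v ξ) = Q ξ ξ := by
      intro ξ
      have hsub : (⟨V g (ξ : H), hVD g ξ⟩ : D) = v ξ := Subtype.ext (hvc ξ).symm
      have := hQinv g ξ
      rwa [hsub] at this
    rw [sesq_polar Q (v φ) (v χ), sesq_polar Q φ χ,
      ]
    simp only [← _root_.map_smul v, ← _root_.map_add v, ← _root_.map_sub v]
    rw [hdiag, hdiag, hdiag, hdiag]
  set ψD : D := ⟨(ψ : H), hTD ψ.2⟩ with hψD
  -- key identity: `Q φ (v ψD) = ⟪φ, V g (T ψ)⟫`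
  have hkey : ∀ φ : D, Q φ (v ψD) = ⟪(φ : H), V g (T ψ)⟫_ℂ := by
    intro φ
    calc Q φ (v ψD) = Q (v (w φ)) (v ψD) := by rw [hvw]
    _ = Q (w φ) ψD := hQinv2 _ _
    _ = ⟪((w φ : D) : H), T ψ⟫_ℂ := hrep ψ (w φ)
    _ = ⟪V g⁻¹ (φ : H), T ψ⟫_ℂ := by rw [hwc]
    _ = ⟪V g (V g⁻¹ (φ : H)), V g (T ψ)⟫_ℂ := ((V g).inner_map_map _ _).symm
    _ = ⟪(φ : H), V g (T ψ)⟫_ℂ := by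
        congr 1
        rw [← LinearIsometryEquiv.coe_toLinearEquiv, ← LinearIsometryEquiv.coe_toLinearEquiv,
          ← LinearEquiv.trans_apply]
        have : (V g⁻¹).toLinearEquiv ≪≫ₗ (V g).toLinearEquiv = (V (g * g⁻¹)).toLinearEquiv := by
          rw [map_mul]; rfl
        rw [this, mul_inv_cancel, map_one]; rfl
  have hx : V g (ψ : H) ∈ T.domain := by
    have := hmax (v ψD) ⟨V g (T ψ), hkey⟩
    rwa [hvc ψD] at this
  refine ⟨hx, ?_⟩
  -- both candidates for `T (V g ψ)` pair equally against the dense `D`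
  apply hD.eq_of_inner_right ℂ
  intro φ' hφ'
  obtain ⟨φ, rfl⟩ : ∃ φ : D, (φ : H) = φ' := ⟨⟨φ', hφ'⟩, rfl⟩
  have h1 : Q φ (v ψD) = ⟪(φ : H), T ⟨V g (ψ : H), hx⟩⟫_ℂ := by
    have hsub : (⟨(V g (ψ : H) : H), hTD hx⟩ : D) = v ψD := Subtype.ext (hvc ψD).symm
    have := hrep ⟨V g (ψ : H), hx⟩ φ
    rwa [hsub] at this
  rw [← h1, hkey]
end

section
/- Let Q be a Hermitean, closed, semi-bounded quadratic form with dense domain D, represented by the self-adjoint operator T. If T is G-invariant, then Q is G-invariant: V(g)D ⊆ D and Q(V(g)φ) = Q(φ) for all φ ∈ D, g ∈ G. -/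
open scoped InnerProductSpace
open LinearPMap

namespace QGinv
variable {H : Type*} [NormedAddCommGroup H] [InnerProductSpace ℂ H]
  {D : Submodule ℂ H}

noncomputable def R (m : ℝ) (Q : D →ₗ⋆[ℂ] D →ₗ[ℂ] ℂ) (x y : D) : ℝ :=
  (Q x y).re + (1 + m) * (⟪(x : H), (y : H)⟫_ℂ).re

variable {m : ℝ} {Q : D →ₗ⋆[ℂ] D →ₗ[ℂ] ℂ}

lemma re_inner_self (x : H) : (⟪x, x⟫_ℂ).re = ‖x‖ ^ 2 := by
  rw [← RCLike.re_to_complex]; exact inner_self_eq_norm_sq x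

lemma re_inner_symm (x y : H) : (⟪x, y⟫_ℂ).re = (⟪y, x⟫_ℂ).re := by
  rw [← RCLike.re_to_complex, ← RCLike.re_to_complex]; exact inner_re_symm x y

lemma norm_sq_le_R (hbound : ∀ φ : D, (Q φ φ).re ≥ -m * ‖(φ : H)‖ ^ 2) (x : D) :
    ‖(x : H)‖ ^ 2 ≤ R m Q x x := by
  have h := hbound x
  unfold R
  rw [re_inner_self]
  nlinarith [sq_nonneg ‖(x : H)‖]

lemma R_nonneg (hbound : ∀ φ : D, (Q φ φ).re ≥ -m * ‖(φ : H)‖ ^ 2) (x : D) :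
    0 ≤ R m Q x x :=
  le_trans (sq_nonneg _) (norm_sq_le_R hbound x)

lemma qNorm_eq (x : D) : qNorm m Q x = Real.sqrt (R m Q x x) := by
  unfold qNorm R
  rw [re_inner_self]

lemma qNorm_nonneg (x : D) : 0 ≤ qNorm m Q x := Real.sqrt_nonneg _

lemma sq_qNorm (hbound : ∀ φ : D, (Q φ φ).re ≥ -m * ‖(φ : H)‖ ^ 2) (x : D) :
    qNorm m Q x ^ 2 = R m Q x x := by
  rw [qNorm_eq, Real.sq_sqrt (R_nonneg hbound x)]

lemma R_expand (hherm : ∀ φ ψ : D, Q φ ψ = starRingEnd ℂ (Q ψ φ)) (x y : D) (t : ℝ) :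
    R m Q (x + (t : ℂ) • y) (x + (t : ℂ) • y)
      = R m Q x x + 2 * t * R m Q x y + t ^ 2 * R m Q y y := by
  have hQ : Q (x + (t : ℂ) • y) (x + (t : ℂ) • y)
      = Q x x + (t : ℂ) * Q x y + (t : ℂ) * Q y x + ((t ^ 2 : ℝ) : ℂ) * Q y y := by
    have h1 : Q ((t : ℂ) • y) = (starRingEnd ℂ (t : ℂ)) • Q y :=
      LinearMap.map_smulₛₗ Q _ _
    simp only [_root_.map_add, LinearMap.add_apply, h1, LinearMap.smul_apply,
      _root_.map_smul, smul_eq_mul, Complex.conj_ofReal]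
    push_cast
    ring
  have hI : ⟪((x + (t : ℂ) • y : D) : H), ((x + (t : ℂ) • y : D) : H)⟫_ℂ
      = ⟪(x : H), (x : H)⟫_ℂ + (t : ℂ) * ⟪(x : H), (y : H)⟫_ℂ
        + (t : ℂ) * ⟪(y : H), (x : H)⟫_ℂ + ((t ^ 2 : ℝ) : ℂ) * ⟪(y : H), (y : H)⟫_ℂ := by
    push_cast
    simp only [inner_add_add_self, inner_smul_left, inner_smul_right, Complex.conj_ofReal]
    push_cast
    ring
  have hre : (Q y x).re = (Q x y).re := by
    rw [hherm y x]; simp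
  unfold R
  rw [hQ, hI]
  simp only [Complex.add_re, Complex.mul_re, Complex.ofReal_re, Complex.ofReal_im]
  rw [hre, re_inner_symm (y : H) (x : H)]
  ring

lemma abs_R_le (hherm : ∀ φ ψ : D, Q φ ψ = starRingEnd ℂ (Q ψ φ))
    (hbound : ∀ φ : D, (Q φ φ).re ≥ -m * ‖(φ : H)‖ ^ 2) (x y : D) :
    |R m Q x y| ≤ qNorm m Q x * qNorm m Q y := by
  have key : ∀ t : ℝ, 0 ≤ R m Q y y * (t * t) + (2 * R m Q x y) * t + R m Q x x := by
    intro t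
    have h := R_nonneg hbound (x + (t : ℂ) • y)
    rw [R_expand hherm x y t] at h
    nlinarith [h]
  have hd := discrim_le_zero key
  rw [discrim] at hd
  have hsq : R m Q x y ^ 2 ≤ R m Q x x * R m Q y y := by nlinarith
  calc |R m Q x y| = Real.sqrt (R m Q x y ^ 2) := (Real.sqrt_sq_eq_abs _).symm
    _ ≤ Real.sqrt (R m Q x x * R m Q y y) := Real.sqrt_le_sqrt hsq
    _ = Real.sqrt (R m Q x x) * Real.sqrt (R m Q y y) :=
        Real.sqrt_mul (R_nonneg hbound x) _
    _ = qNorm m Q x * qNorm m Q y := by rw [qNorm_eq, qNorm_eq]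

lemma qNorm_triangle (hherm : ∀ φ ψ : D, Q φ ψ = starRingEnd ℂ (Q ψ φ))
    (hbound : ∀ φ : D, (Q φ φ).re ≥ -m * ‖(φ : H)‖ ^ 2) (x y : D) :
    qNorm m Q (x + y) ≤ qNorm m Q x + qNorm m Q y := by
  have h1 : R m Q (x + y) (x + y) ≤ (qNorm m Q x + qNorm m Q y) ^ 2 := by
    have he := R_expand (m := m) hherm x y 1
    simp only [Complex.ofReal_one, one_smul, one_pow, mul_one, one_mul] at he
    have hcs := abs_R_le hherm hbound x y
    have := sq_qNorm hbound x
    have := sq_qNorm hbound y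
    have := abs_le.mp hcs
    nlinarith
  rw [qNorm_eq]
  calc Real.sqrt (R m Q (x + y) (x + y)) ≤ Real.sqrt ((qNorm m Q x + qNorm m Q y) ^ 2) :=
        Real.sqrt_le_sqrt h1
    _ = qNorm m Q x + qNorm m Q y := by
        rw [Real.sqrt_sq (add_nonneg (qNorm_nonneg x) (qNorm_nonneg y))]

lemma qNorm_neg (x : D) : qNorm m Q (-x) = qNorm m Q x := by
  unfold qNorm
  simp

open Filter in
lemma norm_le_qNorm (hbound : ∀ φ : D, (Q φ φ).re ≥ -m * ‖(φ : H)‖ ^ 2) (x : D) :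
    ‖(x : H)‖ ≤ qNorm m Q x := by
  have h1 : ‖(x : H)‖ ^ 2 ≤ qNorm m Q x ^ 2 := by
    rw [sq_qNorm hbound]; exact norm_sq_le_R hbound x
  nlinarith [norm_nonneg (x : H), qNorm_nonneg (m := m) (Q := Q) x]

open Filter in
lemma tendsto_norm_sub (hbound : ∀ φ : D, (Q φ φ).re ≥ -m * ‖(φ : H)‖ ^ 2)
    {f : ℕ → D} {φ : D}
    (h : Tendsto (fun n => qNorm m Q (f n - φ)) atTop (nhds 0)) :
    Tendsto (fun n => ‖((f n : H)) - (φ : H)‖) atTop (nhds 0) := by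
  refine squeeze_zero (fun n => norm_nonneg _) (fun n => ?_) h
  have := norm_le_qNorm hbound (f n - φ)
  simpa using this

open Filter in
lemma tendsto_Q (hherm : ∀ φ ψ : D, Q φ ψ = starRingEnd ℂ (Q ψ φ))
    (hbound : ∀ φ : D, (Q φ φ).re ≥ -m * ‖(φ : H)‖ ^ 2)
    {f : ℕ → D} {φ : D}
    (h : Tendsto (fun n => qNorm m Q (f n - φ)) atTop (nhds 0)) :
    Tendsto (fun n => (Q (f n) (f n)).re) atTop (nhds ((Q φ φ).re)) := by
  have hn : ∀ n, R m Q (f n) (f n)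
      = R m Q φ φ + 2 * R m Q φ (f n - φ) + R m Q (f n - φ) (f n - φ) := by
    intro n
    have he := R_expand (m := m) hherm φ (f n - φ) 1
    simp only [Complex.ofReal_one, one_smul, one_pow, one_mul, mul_one] at he
    rw [add_sub_cancel] at he
    linarith
  have ha : Tendsto (fun n => R m Q φ (f n - φ)) atTop (nhds 0) := by
    refine squeeze_zero_norm (a := fun n => qNorm m Q φ * qNorm m Q (f n - φ))
      (fun n => ?_) ?_
    · simpa [Real.norm_eq_abs] using abs_R_le hherm hbound φ (f n - φ)
    · have := h.const_mul (qNorm m Q φ)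
      simpa using this
  have hb : Tendsto (fun n => R m Q (f n - φ) (f n - φ)) atTop (nhds 0) := by
    have h2 : Tendsto (fun n => qNorm m Q (f n - φ) * qNorm m Q (f n - φ)) atTop
        (nhds (0 * 0)) := h.mul h
    simp only [zero_mul] at h2
    refine h2.congr (fun n => ?_)
    rw [← sq, sq_qNorm hbound]
  have hR : Tendsto (fun n => R m Q (f n) (f n)) atTop (nhds (R m Q φ φ)) := by
    have := (tendsto_const_nhds (x := R m Q φ φ) (f := atTop)).add
      ((ha.const_mul 2).add hb)
    simp only [mul_zero, add_zero] at this
    refine this.congr (fun n => ?_)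
    rw [hn n]; ring
  have hH : Tendsto (fun n => ((f n : H))) atTop (nhds (φ : H)) := by
    rw [tendsto_iff_norm_sub_tendsto_zero]
    exact tendsto_norm_sub hbound h
  have hnorm : Tendsto (fun n => ‖((f n : H))‖ ^ 2) atTop (nhds (‖(φ : H)‖ ^ 2)) :=
    (hH.norm).pow 2
  have hfin : Tendsto (fun n => R m Q (f n) (f n) - (1 + m) * ‖((f n : H))‖ ^ 2) atTop
      (nhds (R m Q φ φ - (1 + m) * ‖(φ : H)‖ ^ 2)) :=
    hR.sub (hnorm.const_mul (1 + m))
  have hid : ∀ x : D, (Q x x).re = R m Q x x - (1 + m) * ‖(x : H)‖ ^ 2 := by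
    intro x; unfold R; rw [re_inner_self]; ring
  rw [show (Q φ φ).re = R m Q φ φ - (1 + m) * ‖(φ : H)‖ ^ 2 from hid φ]
  exact hfin.congr (fun n => (hid (f n)).symm)

end QGinv

open Filter

/-- If the self-adjoint operator `T` representing a Hermitean, closed, semi-bounded
quadratic form `Q` is `G`-invariant, then `Q` is `G`-invariant. -/
theorem quadraticForm_GInvariant_of_operator {H : Type*} [NormedAddCommGroup H]
    [InnerProductSpace ℂ H] [CompleteSpace H] {G : Type*} [Group G]
    (V : G →* (H ≃ₗᵢ[ℂ] H)) (D : Submodule ℂ H) (hD : Dense (D : Set H))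
    (Q : D →ₗ⋆[ℂ] D →ₗ[ℂ] ℂ)
    -- `Q` is Hermitean
    (hherm : ∀ φ ψ : D, Q φ ψ = starRingEnd ℂ (Q ψ φ))
    -- `Q` is semi-bounded from below with bound `m ≥ 0`
    (m : ℝ) (hm : 0 ≤ m)
    (hbound : ∀ φ : D, (Q φ φ).re ≥ -m * ‖(φ : H)‖ ^ 2)
    -- `Q` is closed: every `‖·‖_Q`-Cauchy sequence in `D` converges in `‖·‖_Q` to a point of `D`
    (hclosed : ∀ f : ℕ → D,
      (∀ ε > 0, ∃ N, ∀ p ≥ N, ∀ q ≥ N, qNorm m Q (f p - f q) < ε) →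
      ∃ φ : D, Filter.Tendsto (fun n => qNorm m Q (f n - φ)) Filter.atTop (nhds 0))
    -- `T` is the self-adjoint operator representing `Q`
    (T : H →ₗ.[ℂ] H)
    (hTD : T.domain ≤ D)
    (hrep : ∀ ψ : T.domain, ∀ φ : D, Q φ ⟨(ψ : H), hTD ψ.2⟩ = ⟪(φ : H), T ψ⟫_ℂ)
    (hmax : ∀ ψ : D, (∃ χ : H, ∀ φ : D, Q φ ψ = ⟪(φ : H), χ⟫_ℂ) → (ψ : H) ∈ T.domain)
    -- `D(T)` is a form core for `Q`
    (hcore : ∀ φ : D, ∀ ε > (0:ℝ), ∃ ψ : T.domain,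
      qNorm m Q (φ - ⟨(ψ : H), hTD ψ.2⟩) < ε)
    -- `T` is `G`-invariant
    (hTinv : GInvariant V T) :
    -- then `Q` is `G`-invariant
    ∀ (g : G) (φ : D), ∃ hφ : V g (φ : H) ∈ D,
      Q ⟨V g (φ : H), hφ⟩ ⟨V g (φ : H), hφ⟩ = Q φ φ := by
  intro g φ
  classical
  have hseq : ∀ n : ℕ, ∃ ψ : T.domain,
      qNorm m Q (φ - ⟨(ψ : H), hTD ψ.2⟩) < 1 / (n + 1) :=
    fun n => hcore φ (1 / (n + 1)) (by positivity)
  choose ψ hψ using hseq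
  set φn : ℕ → D := fun n => ⟨(ψ n : H), hTD (ψ n).2⟩ with hφn
  have hconv : Tendsto (fun n => qNorm m Q (φn n - φ)) atTop (nhds 0) := by
    refine squeeze_zero (fun n => QGinv.qNorm_nonneg _) (fun n => ?_)
      tendsto_one_div_add_atTop_nhds_zero_nat
    calc qNorm m Q (φn n - φ) = qNorm m Q (-(φ - φn n)) := by rw [neg_sub]
      _ = qNorm m Q (φ - φn n) := QGinv.qNorm_neg _
      _ ≤ 1 / (n + 1) := (hψ n).le
  -- invariance of Q on the core
  have hinvQ : ∀ χ : T.domain, ∀ hmem : V g (χ : H) ∈ T.domain,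
      T ⟨V g (χ : H), hmem⟩ = V g (T χ) →
      Q ⟨V g (χ : H), hTD hmem⟩ ⟨V g (χ : H), hTD hmem⟩
        = Q ⟨(χ : H), hTD χ.2⟩ ⟨(χ : H), hTD χ.2⟩ := by
    intro χ hmem heq
    have h1 : Q ⟨V g (χ : H), hTD hmem⟩ ⟨V g (χ : H), hTD hmem⟩
        = ⟪V g (χ : H), T ⟨V g (χ : H), hmem⟩⟫_ℂ := hrep ⟨V g (χ : H), hmem⟩ _
    have h2 : Q ⟨(χ : H), hTD χ.2⟩ ⟨(χ : H), hTD χ.2⟩ = ⟪(χ : H), T χ⟫_ℂ := hrep χ _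
    rw [h1, h2, heq]
    exact (V g).inner_map_map (χ : H) (T χ)
  have hinvN : ∀ χ : T.domain, ∀ hmem : V g (χ : H) ∈ T.domain,
      T ⟨V g (χ : H), hmem⟩ = V g (T χ) →
      qNorm m Q ⟨V g (χ : H), hTD hmem⟩ = qNorm m Q ⟨(χ : H), hTD χ.2⟩ := by
    intro χ hmem heq
    unfold qNorm
    rw [hinvQ χ hmem heq]
    simp
  choose hmem hTeq using fun n => hTinv g (ψ n)
  set xn : ℕ → D := fun n => ⟨V g ((ψ n : H)), hTD (hmem n)⟩ with hxn
  have hkey : ∀ p q, qNorm m Q (xn p - xn q) = qNorm m Q (φn p - φn q) := by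
    intro p q
    obtain ⟨hm2, ht2⟩ := hTinv g (ψ p - ψ q)
    have e1 : xn p - xn q = ⟨V g (((ψ p - ψ q : T.domain) : H)), hTD hm2⟩ := by
      apply Subtype.ext
      simp [hxn]
    have e2 : φn p - φn q = ⟨((ψ p - ψ q : T.domain) : H), hTD (ψ p - ψ q).2⟩ := by
      apply Subtype.ext
      simp [hφn]
    rw [e1, e2]
    exact hinvN (ψ p - ψ q) hm2 ht2
  have hcauchy : ∀ ε > 0, ∃ N, ∀ p ≥ N, ∀ q ≥ N, qNorm m Q (xn p - xn q) < ε := by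
    intro ε hε
    obtain ⟨N, hN⟩ := (Metric.tendsto_atTop.mp hconv) (ε / 2) (by linarith)
    refine ⟨N, fun p hp q hq => ?_⟩
    have hb1 : ∀ r ≥ N, qNorm m Q (φn r - φ) < ε / 2 := by
      intro r hr
      have := hN r hr
      rwa [Real.dist_0_eq_abs, abs_of_nonneg (QGinv.qNorm_nonneg _)] at this
    rw [hkey p q]
    have hsplit : φn p - φn q = (φn p - φ) + -(φn q - φ) := by abel
    calc qNorm m Q (φn p - φn q)
        = qNorm m Q ((φn p - φ) + -(φn q - φ)) := by rw [hsplit]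
      _ ≤ qNorm m Q (φn p - φ) + qNorm m Q (-(φn q - φ)) :=
          QGinv.qNorm_triangle hherm hbound _ _
      _ = qNorm m Q (φn p - φ) + qNorm m Q (φn q - φ) := by rw [QGinv.qNorm_neg]
      _ < ε / 2 + ε / 2 := add_lt_add (hb1 p hp) (hb1 q hq)
      _ = ε := by ring
  obtain ⟨χ, hχ⟩ := hclosed xn hcauchy
  have hQx : Tendsto (fun n => (Q (xn n) (xn n)).re) atTop (nhds ((Q χ χ).re)) :=
    QGinv.tendsto_Q hherm hbound hχ
  have hQφ : Tendsto (fun n => (Q (φn n) (φn n)).re) atTop (nhds ((Q φ φ).re)) :=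
    QGinv.tendsto_Q hherm hbound hconv
  have heqn : ∀ n, Q (xn n) (xn n) = Q (φn n) (φn n) := fun n =>
    hinvQ (ψ n) (hmem n) (hTeq n)
  have hφ1 : Tendsto (fun n => ((φn n : H))) atTop (nhds (φ : H)) := by
    rw [tendsto_iff_norm_sub_tendsto_zero]
    exact QGinv.tendsto_norm_sub hbound hconv
  have hx1 : Tendsto (fun n => ((xn n : H))) atTop (nhds (χ : H)) := by
    rw [tendsto_iff_norm_sub_tendsto_zero]
    exact QGinv.tendsto_norm_sub hbound hχ
  have hx2 : Tendsto (fun n => ((xn n : H))) atTop (nhds (V g (φ : H))) := by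
    have h3 : Tendsto (fun n => V g ((φn n : H))) atTop (nhds (V g (φ : H))) :=
      ((V g).continuous.tendsto _).comp hφ1
    exact h3
  have hVφ : V g (φ : H) = (χ : H) := tendsto_nhds_unique hx2 hx1
  have hφmem : V g (φ : H) ∈ D := by rw [hVφ]; exact χ.2
  refine ⟨hφmem, ?_⟩
  have hel : (⟨V g (φ : H), hφmem⟩ : D) = χ := Subtype.ext hVφ
  rw [hel]
  have hre : (Q χ χ).re = (Q φ φ).re := by
    refine tendsto_nhds_unique (hQx.congr (fun n => ?_)) hQφ
    rw [heqn n]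
  have him : ∀ x : D, (Q x x).im = 0 := fun x =>
    Complex.conj_eq_iff_im.mp (hherm x x).symm
  exact Complex.ext hre (by rw [him, him])
end

section
/- Let T be a closed, symmetric operator on H. Then T is G-invariant with respect to a unitary representation V if and only if T is affiliated to the commutant von Neumann algebra V' = {V(g) : g ∈ G}', i.e., W*(T) = ({T}' ∩ {T†}')' ⊆ V'. -/
open scoped InnerProductSpace
open LinearPMap

/-- The commutant (in `L(H)`) of a set of bounded operators. -/
def boundedCommutant {H : Type*} [NormedAddCommGroup H] [NormedSpace ℂ H]
    (S : Set (H →L[ℂ] H)) : Set (H →L[ℂ] H) :=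
  {A | ∀ B ∈ S, A * B = B * A}

/-- The commutant of a (possibly unbounded) operator `T`: the bounded operators mapping
the domain of `T` into itself and commuting with `T` on it (`TA ⊇ AT`). -/
def pmapCommutant {H : Type*} [NormedAddCommGroup H] [InnerProductSpace ℂ H]
    (T : H →ₗ.[ℂ] H) : Set (H →L[ℂ] H) :=
  {A | ∀ x : T.domain, ∃ hx : A (x : H) ∈ T.domain, T ⟨A (x : H), hx⟩ = A (T x)}

/-- The von Neumann algebra of bounded components of `T`:
`W*(T) = ({T}' ∩ {T†}')'`. -/
def Wstar {H : Type*} [NormedAddCommGroup H] [InnerProductSpace ℂ H] [CompleteSpace H]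
    (T : H →ₗ.[ℂ] H) : Set (H →L[ℂ] H) :=
  boundedCommutant (pmapCommutant T ∩ pmapCommutant T.adjoint)

set_option linter.unusedSectionVars false
set_option linter.unusedVariables false

section Aux

variable {H : Type*} [NormedAddCommGroup H] [InnerProductSpace ℂ H] [CompleteSpace H]
variable {G : Type*} [Group G]

lemma VmulV (V : G →* (H ≃ₗᵢ[ℂ] H)) (g : G) (z : H) : V g (V g⁻¹ z) = z := by
  have : (V g * V g⁻¹) z = z := by rw [← map_mul, mul_inv_cancel, map_one]; rfl
  exact this

lemma Vinner (V : G →* (H ≃ₗᵢ[ℂ] H)) (g : G) (x z : H) :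
    ⟪V g x, z⟫_ℂ = ⟪x, V g⁻¹ z⟫_ℂ := by
  conv_lhs => rw [← VmulV V g z]
  exact (V g).inner_map_map x _

/-- The product Hilbert space `H ⊕ H` with the `ℓ²` inner product. -/
abbrev E2 (H : Type*) [NormedAddCommGroup H] := WithLp 2 (H × H)

noncomputable def e2 : E2 H ≃L[ℂ] H × H := WithLp.prodContinuousLinearEquiv 2 ℂ H H

noncomputable def mk2 (a b : H) : E2 H := (e2 (H := H)).symm (a, b)

@[simp] lemma mk2_fst (a b : H) : (mk2 a b).fst = a := rfl
@[simp] lemma mk2_snd (a b : H) : (mk2 a b).snd = b := rfl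
@[simp] lemma e2_apply (x : E2 H) : e2 (H := H) x = (x.fst, x.snd) := rfl

lemma inner_E2 (x y : E2 H) : ⟪x, y⟫_ℂ = ⟪x.fst, y.fst⟫_ℂ + ⟪x.snd, y.snd⟫_ℂ := rfl

/-- The graph of `T` as a submodule of the product Hilbert space. -/
noncomputable def gK (T : H →ₗ.[ℂ] H) : Submodule ℂ (E2 H) :=
  T.graph.comap ((e2 (H := H)).toLinearEquiv.toLinearMap)

lemma mem_gK {T : H →ₗ.[ℂ] H} {x : E2 H} :
    x ∈ gK T ↔ ∃ y : T.domain, (y : H) = x.fst ∧ T y = x.snd := by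
  rw [gK, Submodule.mem_comap]
  exact T.mem_graph_iff

lemma mk2_mem_gK {T : H →ₗ.[ℂ] H} (x : T.domain) : mk2 (x : H) (T x) ∈ gK T :=
  mem_gK.mpr ⟨x, rfl, rfl⟩

lemma isClosed_gK {T : H →ₗ.[ℂ] H} (hclosed : T.IsClosed) : IsClosed (gK T : Set (E2 H)) := by
  have : (gK T : Set (E2 H)) = (e2 (H := H)) ⁻¹' (T.graph : Set (H × H)) := rfl
  rw [this]
  exact hclosed.preimage (e2 (H := H)).continuous

/-- A bounded operator `A ⊕ A` acting diagonally on the product space. -/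
noncomputable def lift2 (A : H →L[ℂ] H) : E2 H →L[ℂ] E2 H :=
  ((e2 (H := H)).symm.toContinuousLinearMap).comp
    ((A.prodMap A).comp (e2 (H := H)).toContinuousLinearMap)

@[simp] lemma lift2_fst (A : H →L[ℂ] H) (x : E2 H) : (lift2 A x).fst = A x.fst := rfl
@[simp] lemma lift2_snd (A : H →L[ℂ] H) (x : E2 H) : (lift2 A x).snd = A x.snd := rfl

lemma lift2_mk2 (A : H →L[ℂ] H) (a b : H) : lift2 A (mk2 a b) = mk2 (A a) (A b) := rfl

lemma lift2_inner (A : H →L[ℂ] H) (x y : E2 H) :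
    ⟪x, lift2 A y⟫_ℂ = ⟪lift2 (ContinuousLinearMap.adjoint A) x, y⟫_ℂ := by
  rw [inner_E2, inner_E2, lift2_fst, lift2_snd, lift2_fst, lift2_snd,
    ContinuousLinearMap.adjoint_inner_left, ContinuousLinearMap.adjoint_inner_left]

/-- Operators in the commutant of `T` leave the graph of `T` invariant (diagonally). -/
lemma lift2_mem_gK {T : H →ₗ.[ℂ] H} {A : H →L[ℂ] H} (hA : A ∈ pmapCommutant T)
    {x : E2 H} (hx : x ∈ gK T) : lift2 A x ∈ gK T := by
  obtain ⟨y, h1, h2⟩ := mem_gK.mp hx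
  obtain ⟨hm, he⟩ := hA y
  exact mem_gK.mpr ⟨⟨A (y : H), hm⟩, by simp [h1], by rw [he, h2]; rfl⟩


/-- If `B` leaves a closed subspace `K` invariant and admits a formal adjoint `B'` that also
leaves `K` invariant, then `B` commutes with the orthogonal projection onto `K`. -/
lemma proj_comm {E : Type*} [NormedAddCommGroup E] [InnerProductSpace ℂ E] [CompleteSpace E]
    (K : Submodule ℂ E) [CompleteSpace K] (B B' : E →L[ℂ] E)
    (hB : ∀ x ∈ K, B x ∈ K) (hB' : ∀ x ∈ K, B' x ∈ K)
    (hBB' : ∀ x y : E, ⟪x, B y⟫_ℂ = ⟪B' x, y⟫_ℂ) (x : E) :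
    (K.orthogonalProjectionOnto (B x) : E) = B (K.orthogonalProjectionOnto x) := by
  have hdecomp : B x = B (K.orthogonalProjectionOnto x : E) + B (x - K.orthogonalProjectionOnto x) := by
    rw [← B.map_add]
    congr 1
    abel
  have h1 : B ((K.orthogonalProjectionOnto x : E)) ∈ K := hB _ (K.orthogonalProjectionOnto x).2
  have h2 : B (x - K.orthogonalProjectionOnto x) ∈ Kᗮ := by
    rw [Submodule.mem_orthogonal]
    intro u hu
    rw [hBB']
    exact (Submodule.mem_orthogonal K _).mp (K.sub_starProjection_mem_orthogonal x) _
      (hB' u hu)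
  rw [hdecomp, _root_.map_add, Submodule.coe_add,
    Submodule.orthogonalProjectionOnto_apply_of_mem_orthogonal h2,
    (by exact Submodule.starProjection_eq_self_iff.mpr h1 :
      ((K.orthogonalProjectionOnto (B (K.orthogonalProjectionOnto x : E)) : E) =
        B (K.orthogonalProjectionOnto x : E)))]
  simp

/-- If `A` commutes with `T†`, then `A†` commutes with `T` (for `T` closed, densely defined). -/
lemma adjoint_mem_pmapCommutant {T : H →ₗ.[ℂ] H} (hdense : Dense (T.domain : Set H))
    (hclosed : T.IsClosed) {A : H →L[ℂ] H} (hA : A ∈ pmapCommutant T.adjoint) :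
    ContinuousLinearMap.adjoint A ∈ pmapCommutant T := by
  haveI : CompleteSpace (gK T) := (isClosed_gK hclosed).completeSpace_coe
  set A' := ContinuousLinearMap.adjoint A with hA'
  intro x
  -- it suffices to show that `(A† x, A† (T x))` lies in the graph of `T`
  suffices hW : mk2 (A' (x : H)) (A' (T x)) ∈ gK T by
    obtain ⟨y, h1, h2⟩ := mem_gK.mp hW
    rw [mk2_fst] at h1
    rw [mk2_snd] at h2
    refine ⟨h1 ▸ y.2, ?_⟩
    rw [show (⟨A' (x : H), h1 ▸ y.2⟩ : T.domain) = y from Subtype.ext h1.symm]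
    exact h2
  -- use that the graph is closed, hence equal to its double orthogonal complement
  rw [← Submodule.orthogonal_orthogonal (gK T)]
  rw [Submodule.mem_orthogonal]
  intro u hu
  -- `u = (u₁, u₂) ⟂ graph T` implies `u₂ ∈ D(T†)` with `T† u₂ = -u₁`
  have hTz : ∀ z : T.domain, ⟪(z : H), u.fst⟫_ℂ + ⟪T z, u.snd⟫_ℂ = 0 := by
    intro z
    have := (Submodule.mem_orthogonal (gK T) u).mp hu _ (mk2_mem_gK z)
    rwa [inner_E2, mk2_fst, mk2_snd] at this
  have hu2 : ∀ z : T.domain, ⟪-u.fst, (z : H)⟫_ℂ = ⟪u.snd, T z⟫_ℂ := by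
    intro z
    have h := hTz z
    have : ⟪T z, u.snd⟫_ℂ = ⟪(z : H), -u.fst⟫_ℂ := by
      rw [inner_neg_right]
      linear_combination h
    rw [← inner_conj_symm u.snd, this, inner_conj_symm]
  have hmem : u.snd ∈ T.adjoint.domain :=
    LinearPMap.mem_adjoint_domain_of_exists _ ⟨-u.fst, hu2⟩
  have hval : T.adjoint ⟨u.snd, hmem⟩ = -u.fst :=
    LinearPMap.adjoint_apply_eq hdense _ hu2
  -- now compute the inner product
  obtain ⟨hm, he⟩ := hA ⟨u.snd, hmem⟩
  rw [inner_E2, mk2_fst, mk2_snd, ContinuousLinearMap.adjoint_inner_right,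
    ContinuousLinearMap.adjoint_inner_right]
  have h3 : ⟪A u.snd, T x⟫_ℂ = ⟪-(A u.fst), x⟫_ℂ := by
    have := (LinearPMap.adjoint_isFormalAdjoint hdense) ⟨A u.snd, hm⟩ x
    rw [he, hval] at this
    simpa using this.symm
  rw [h3, inner_neg_left]
  ring


lemma ext2 {x y : E2 H} (h1 : x.fst = y.fst) (h2 : x.snd = y.snd) : x = y :=
  (e2 (H := H)).injective (Prod.ext h1 h2)

lemma mk2_self (x : E2 H) : mk2 x.fst x.snd = x := rfl

/-- The matrix entries of the projection onto the graph of `T` belong to `W*(T)`. -/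
lemma entry_mem_Wstar {T : H →ₗ.[ℂ] H} (hdense : Dense (T.domain : Set H))
    (hclosed : T.IsClosed) [CompleteSpace (gK T)]
    (pr : E2 H →L[ℂ] H) (io : H →L[ℂ] E2 H)
    (hpr : ∀ (A : H →L[ℂ] H) (z : E2 H), pr (lift2 A z) = A (pr z))
    (hio : ∀ (A : H →L[ℂ] H) (a : H), lift2 A (io a) = io (A a)) :
    (pr ∘L ((gK T).subtypeL ∘L (gK T).orthogonalProjectionOnto) ∘L io) ∈ Wstar T := by
  intro A hA
  refine ContinuousLinearMap.ext fun a => ?_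
  have hc := proj_comm (gK T) (lift2 A) (lift2 (ContinuousLinearMap.adjoint A))
    (fun x hx => lift2_mem_gK hA.1 hx)
    (fun x hx => lift2_mem_gK (adjoint_mem_pmapCommutant hdense hclosed hA.2) hx)
    (fun x y => lift2_inner A x y)
  show pr (((gK T).orthogonalProjectionOnto (io (A a)) : E2 H)) =
    A (pr (((gK T).orthogonalProjectionOnto (io a) : E2 H)))
  rw [← hio A a, hc (io a), hpr]

end Aux

/-- A closed, symmetric, densely defined operator `T` is `G`-invariant if and only if it
is affiliated to the commutant `𝒱' = {V(g) : g ∈ G}'`, i.e. `W*(T) ⊆ 𝒱'`. -/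
theorem gInvariant_iff_affiliated {H : Type*} [NormedAddCommGroup H]
    [InnerProductSpace ℂ H] [CompleteSpace H] {G : Type*} [Group G]
    (V : G →* (H ≃ₗᵢ[ℂ] H)) (T : H →ₗ.[ℂ] H)
    (hdense : Dense (T.domain : Set H)) (hclosed : T.IsClosed)
    (hsymm : ∀ x y : T.domain, ⟪T x, (y : H)⟫_ℂ = ⟪(x : H), T y⟫_ℂ) :
    GInvariant V T ↔
      Wstar T ⊆ boundedCommutant
        {A : H →L[ℂ] H | ∃ g : G, A = (V g).toLinearIsometry.toContinuousLinearMap} := by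
  constructor
  · -- G-invariance implies affiliation
    intro hinv A hA B hB
    obtain ⟨g, rfl⟩ := hB
    refine hA _ ⟨fun x => hinv g x, fun x => ?_⟩
    -- `V g` commutes with the adjoint `T†`
    have hcalc : ∀ z : T.domain, ⟪V g (T.adjoint x), (z : H)⟫_ℂ = ⟪V g (x : H), T z⟫_ℂ := by
      intro z
      obtain ⟨hz, hze⟩ := hinv g⁻¹ z
      rw [Vinner V g _ _, Vinner V g _ _,
        (LinearPMap.adjoint_isFormalAdjoint hdense) x ⟨V g⁻¹ (z : H), hz⟩, hze]
    have hmem : V g (x : H) ∈ T.adjoint.domain :=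
      LinearPMap.mem_adjoint_domain_of_exists _ ⟨V g (T.adjoint x), hcalc⟩
    exact ⟨hmem, LinearPMap.adjoint_apply_eq hdense ⟨_, hmem⟩ hcalc⟩
  · -- affiliation implies G-invariance
    intro hsub g x
    haveI : CompleteSpace (gK T) := (isClosed_gK hclosed).completeSpace_coe
    set U : H →L[ℂ] H := (V g).toLinearIsometry.toContinuousLinearMap with hU
    set Q : E2 H →L[ℂ] E2 H := (gK T).subtypeL ∘L (gK T).orthogonalProjectionOnto with hQ
    set pr1 : E2 H →L[ℂ] H :=
      (ContinuousLinearMap.fst ℂ H H).comp (e2 (H := H)).toContinuousLinearMap with hpr1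
    set pr2 : E2 H →L[ℂ] H :=
      (ContinuousLinearMap.snd ℂ H H).comp (e2 (H := H)).toContinuousLinearMap with hpr2
    set io1 : H →L[ℂ] E2 H :=
      (e2 (H := H)).symm.toContinuousLinearMap.comp (ContinuousLinearMap.inl ℂ H H) with hio1
    set io2 : H →L[ℂ] E2 H :=
      (e2 (H := H)).symm.toContinuousLinearMap.comp (ContinuousLinearMap.inr ℂ H H) with hio2
    have hprf : ∀ (A : H →L[ℂ] H) (z : E2 H), pr1 (lift2 A z) = A (pr1 z) := fun A z => rfl
    have hprs : ∀ (A : H →L[ℂ] H) (z : E2 H), pr2 (lift2 A z) = A (pr2 z) := fun A z => rfl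
    have hiof : ∀ (A : H →L[ℂ] H) (a : H), lift2 A (io1 a) = io1 (A a) := fun A a =>
      ext2 rfl (by show A 0 = 0; exact map_zero A)
    have hios : ∀ (A : H →L[ℂ] H) (a : H), lift2 A (io2 a) = io2 (A a) := fun A a =>
      ext2 (by show A 0 = 0; exact map_zero A) rfl
    -- the four matrix entries of Q commute with U
    have hP : ∀ (pr : E2 H →L[ℂ] H) (io : H →L[ℂ] E2 H),
        (∀ (A : H →L[ℂ] H) (z : E2 H), pr (lift2 A z) = A (pr z)) →
        (∀ (A : H →L[ℂ] H) (a : H), lift2 A (io a) = io (A a)) →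
        ∀ a : H, pr (Q (io (U a))) = U (pr (Q (io a))) := by
      intro pr io hpr hio a
      have hmem := entry_mem_Wstar hdense hclosed pr io hpr hio
      have := hsub hmem U ⟨g, rfl⟩
      calc pr (Q (io (U a))) = ((pr ∘L Q ∘L io) * U) a := rfl
        _ = (U * (pr ∘L Q ∘L io)) a := by rw [this]
        _ = U (pr (Q (io a))) := rfl
    -- decomposition of elements of E2
    have hdecomp : ∀ z : E2 H, z = io1 z.fst + io2 z.snd := by
      intro z
      apply (e2 (H := H)).injective
      rw [_root_.map_add]
      refine Prod.ext ?_ ?_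
      · show z.fst = z.fst + 0
        rw [add_zero]
      · show z.snd = 0 + z.snd
        rw [zero_add]
    -- Q commutes with the diagonal action of U
    have hQU : ∀ z : E2 H, Q (lift2 U z) = lift2 U (Q z) := by
      intro z
      have hz : lift2 U z = io1 (U z.fst) + io2 (U z.snd) := by
        conv_lhs => rw [hdecomp z, _root_.map_add, hiof, hios]
      rw [hz, _root_.map_add]
      conv_rhs => rw [hdecomp z, _root_.map_add, _root_.map_add]
      apply ext2
      · exact congrArg₂ (· + ·) (hP pr1 io1 hprf hiof z.fst) (hP pr1 io2 hprf hios z.snd)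
      · exact congrArg₂ (· + ·) (hP pr2 io1 hprs hiof z.fst) (hP pr2 io2 hprs hios z.snd)
    -- conclude: the image of the graph element (x, Tx) under U ⊕ U is in the graph
    have hk : mk2 (x : H) (T x) ∈ gK T := mk2_mem_gK x
    have hQk : Q (mk2 (x : H) (T x)) = mk2 (x : H) (T x) := by
      show (((gK T).orthogonalProjectionOnto _ : gK T) : E2 H) = _
      exact Submodule.starProjection_eq_self_iff.mpr hk
    have hW : mk2 (U (x : H)) (U (T x)) ∈ gK T := by
      rw [← lift2_mk2, ← hQk, ← hQU]
      exact (((gK T).orthogonalProjectionOnto) (lift2 U (mk2 (x : H) (T x)))).2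
    obtain ⟨y, h1, h2⟩ := mem_gK.mp hW
    rw [mk2_fst] at h1
    rw [mk2_snd] at h2
    have h1' : (y : H) = V g (x : H) := h1
    have h2' : T y = V g (T x) := h2
    refine ⟨h1' ▸ y.2, ?_⟩
    rw [show (⟨V g (x : H), h1' ▸ y.2⟩ : T.domain) = y from Subtype.ext h1'.symm]
    exact h2'
end

section
/- Let T be a self-adjoint operator on H that is G-invariant with respect to a unitary, irreducible representation V of G on H. Then T is bounded and T = i((λ-1)/(λ+1))·I for some λ on the unit circle with λ ≠ -1. -/
open scoped InnerProductSpace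
open LinearPMap

/-- Irreducibility of a unitary representation: the only closed invariant subspaces are
`⊥` and `⊤`. -/
def IsIrreducibleRep {H : Type*} [NormedAddCommGroup H] [InnerProductSpace ℂ H]
    {G : Type*} [Group G] (V : G →* (H ≃ₗᵢ[ℂ] H)) : Prop :=
  ∀ K : Submodule ℂ H, IsClosed (K : Set H) →
    (∀ g : G, K.map (V g).toLinearEquiv.toLinearMap ≤ K) → K = ⊥ ∨ K = ⊤

set_option linter.unusedSectionVars false
set_option linter.unusedVariables false
set_option maxHeartbeats 1000000

section Helpers

variable {H : Type*} [NormedAddCommGroup H] [InnerProductSpace ℂ H] [CompleteSpace H]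

lemma sq_norm_eq {a b : ℝ} (ha : 0 ≤ a) (hb : 0 ≤ b) (h : a ^ 2 = b ^ 2) : a = b := by
  nlinarith [sq_nonneg (a - b), sq_nonneg (a + b)]

noncomputable def Wclm (W : H ≃ₗᵢ[ℂ] H) : H →L[ℂ] H :=
  W.toContinuousLinearEquiv.toContinuousLinearMap

@[simp] lemma Wclm_apply (W : H ≃ₗᵢ[ℂ] H) (x : H) : Wclm W x = W x := rfl

lemma star_Wclm (W : H ≃ₗᵢ[ℂ] H) : star (Wclm W) = Wclm W.symm := by
  have : Wclm W.symm = ContinuousLinearMap.adjoint (Wclm W) :=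
    (ContinuousLinearMap.eq_adjoint_iff (Wclm W.symm) (Wclm W)).mpr (by
      intro x y
      conv_lhs => rw [show (Wclm W.symm x) = W.symm x from rfl,
        ← W.inner_map_map (W.symm x) y]
      simp)
  rw [this]; rfl

noncomputable def conjSAH (W : H ≃ₗᵢ[ℂ] H) : (H →L[ℂ] H) →⋆ₐ[ℂ] (H →L[ℂ] H) where
  toFun X := Wclm W * X * Wclm W.symm
  map_one' := by ext x; simp
  map_mul' X Y := by ext x; simp [ContinuousLinearMap.mul_apply]
  map_zero' := by simp
  map_add' X Y := by noncomm_ring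
  commutes' c := by ext x; simp [Algebra.algebraMap_eq_smul_one]
  map_star' X := by
    simp only [star_mul, star_Wclm, LinearIsometryEquiv.symm_symm, mul_assoc]

@[simp] lemma conjSAH_apply (W : H ≃ₗᵢ[ℂ] H) (X : H →L[ℂ] H) :
    conjSAH W X = Wclm W * X * Wclm W.symm := rfl

lemma conjSAH_cont (W : H ≃ₗᵢ[ℂ] H) : Continuous (conjSAH W) := by
  show Continuous fun X : H →L[ℂ] H => Wclm W * X * Wclm W.symm
  fun_prop

lemma Wclm_mul_symm (W : H ≃ₗᵢ[ℂ] H) : Wclm W * Wclm W.symm = 1 := by ext x; simp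

lemma schur {G : Type*} [Group G] (V : G →* (H ≃ₗᵢ[ℂ] H)) (hirr : IsIrreducibleRep V)
    (A : H →L[ℂ] H) (hA : IsSelfAdjoint A)
    (hcomm : ∀ g : G, Wclm (V g) * A = A * Wclm (V g)) :
    ∃ r : ℝ, A = (r : ℂ) • 1 := by
  have halg : ∀ r : ℝ, algebraMap ℝ (H →L[ℂ] H) r = (r : ℂ) • 1 := by
    intro r; ext x
    simp [Algebra.algebraMap_eq_smul_one, Complex.coe_smul]
  rcases subsingleton_or_nontrivial H with h|h
  · exact ⟨0, Subsingleton.elim _ _⟩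
  have hconj : ∀ g, conjSAH (V g) A = A := by
    intro g
    simp only [conjSAH_apply, hcomm g, mul_assoc, Wclm_mul_symm, mul_one]
  -- cfc commutes with each V g
  have hconjf : ∀ (f : ℝ → ℝ), Continuous f → ∀ g,
      Wclm (V g) * cfc f A = cfc f A * Wclm (V g) := by
    intro f hf g
    have h1 : conjSAH (V g) (cfc f A) = cfc f (conjSAH (V g) A) :=
      StarAlgHom.map_cfc (conjSAH (V g)) f A (hf.continuousOn) (conjSAH_cont _) hA
        (by rw [hconj]; exact hA)
    rw [hconj] at h1
    calc Wclm (V g) * cfc f A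
        = (Wclm (V g) * cfc f A * Wclm (V g).symm) * Wclm (V g) := by
          rw [mul_assoc, show Wclm (V g).symm * Wclm (V g) = 1 from by ext x; simp, mul_one]
      _ = cfc f A * Wclm (V g) := by rw [show Wclm (V g) * cfc f A * Wclm (V g).symm = cfc f A from h1]
  -- kernels of nonzero cfc's are trivial
  have hker : ∀ (f : ℝ → ℝ), Continuous f → cfc f A ≠ 0 → LinearMap.ker ((cfc f A : H →L[ℂ] H) : H →ₗ[ℂ] H) = ⊥ := by
    intro f hf hne
    have hinvK : ∀ g : G, (LinearMap.ker ((cfc f A : H →L[ℂ] H) : H →ₗ[ℂ] H)).map (V g).toLinearEquiv.toLinearMap ≤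
        LinearMap.ker ((cfc f A : H →L[ℂ] H) : H →ₗ[ℂ] H) := by
      intro g y hy
      simp only [Submodule.mem_map] at hy
      obtain ⟨x, hx, rfl⟩ := hy
      have hcfc : cfc f A ((V g) x) = (V g) (cfc f A x) := by
        have := congrArg (fun (X : H →L[ℂ] H) => X x) (hconjf f hf g)
        simpa using this.symm
      rw [LinearMap.mem_ker] at hx ⊢
      show cfc f A ((V g) x) = 0
      rw [hcfc, show cfc f A x = 0 from hx]; exact _root_.map_zero _
    rcases hirr (LinearMap.ker ((cfc f A : H →L[ℂ] H) : H →ₗ[ℂ] H)) (ContinuousLinearMap.isClosed_ker _) hinvK with h0 | h0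
    · exact h0
    · exact absurd (by ext x : 1; exact (LinearMap.mem_ker).mp (h0 ▸ Submodule.mem_top)) hne
  -- spectrum is a single point
  obtain ⟨r, hr⟩ := hA.spectrum_nonempty
  have hsub : spectrum ℝ A ⊆ {r} := by
    intro b hb
    by_contra hbr
    simp only [Set.mem_singleton_iff] at hbr
    set ε : ℝ := |b - r| / 2 with hε
    have hεpos : 0 < ε := by
      have : b - r ≠ 0 := sub_ne_zero.mpr hbr
      positivity
    set f : ℝ → ℝ := fun x => max (ε - |x - r|) 0 with hfdef
    set g : ℝ → ℝ := fun x => max (ε - |x - b|) 0 with hgdef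
    have hf : Continuous f := by fun_prop
    have hg : Continuous g := by fun_prop
    have hfg : ∀ x, f x * g x = 0 := by
      intro x
      rcases le_or_gt (ε - |x - r|) 0 with hc | hc
      · have : f x = 0 := max_eq_right hc
        rw [this, zero_mul]
      · have h1 : |x - r| < ε := by linarith
        have h2 : ε ≤ |x - b| := by
          have : |b - r| ≤ |x - r| + |x - b| := by
            have := abs_sub_abs_le_abs_sub (b - r) 0
            calc |b - r| = |(x - r) - (x - b)| := by ring_nf
              _ ≤ |x - r| + |x - b| := abs_sub _ _
          rw [hε] at h1 ⊢
          linarith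
        have : g x = 0 := max_eq_right (by linarith)
        rw [this, mul_zero]
    have hFne : cfc f A ≠ 0 := by
      intro h0
      have hle := norm_apply_le_norm_cfc f A hr hf.continuousOn hA
      rw [h0, norm_zero] at hle
      have hfr : f r = ε := by simp [hfdef, le_of_lt hεpos]
      have : ‖f r‖ = ε := by rw [hfr]; exact abs_of_pos hεpos
      linarith [this ▸ hle]
    have hGne : cfc g A ≠ 0 := by
      intro h0
      have hle := norm_apply_le_norm_cfc g A hb hg.continuousOn hA
      rw [h0, norm_zero] at hle
      have hfr : g b = ε := by simp [hgdef, le_of_lt hεpos]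
      have : ‖g b‖ = ε := by rw [hfr]; exact abs_of_pos hεpos
      linarith [this ▸ hle]
    have hprod : cfc f A * cfc g A = 0 := by
      rw [← cfc_mul f g A hf.continuousOn hg.continuousOn]
      have : (fun x => f x * g x) = (0 : ℝ → ℝ) := funext hfg
      rw [this]
      exact cfc_zero ℝ A
    apply hGne
    ext y
    have : cfc f A (cfc g A y) = 0 := by
      have := congrArg (fun (X : H →L[ℂ] H) => X y) hprod
      simpa using this
    have hmem : cfc g A y ∈ LinearMap.ker ((cfc f A : H →L[ℂ] H) : H →ₗ[ℂ] H) := LinearMap.mem_ker.mpr this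
    rw [hker f hf hFne, Submodule.mem_bot] at hmem
    simpa using hmem
  refine ⟨r, ?_⟩
  rw [← halg]
  calc A = cfc (id : ℝ → ℝ) A := (cfc_id ℝ A).symm
    _ = cfc (fun _ => r) A := cfc_congr (fun x hx => (hsub hx : x = r))
    _ = algebraMap ℝ (H →L[ℂ] H) r := cfc_const r A

variable {T : H →ₗ.[ℂ] H}

lemma pmap_congr {S T : H →ₗ.[ℂ] H} (h : S = T) (x : S.domain)
    (hx : (x : H) ∈ T.domain) : S x = T ⟨(x : H), hx⟩ := by
  subst h; exact congrArg S (Subtype.ext rfl)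

lemma symm_of_sa (hsa : T.adjoint = T) (hdense : Dense (T.domain : Set H)) :
    ∀ x y : T.domain, ⟪(T x : H), (y : H)⟫_ℂ = ⟪(x : H), (T y : H)⟫_ℂ := by
  intro x y
  have hx' : (x : H) ∈ T.adjoint.domain := (congrArg LinearPMap.domain hsa).symm ▸ x.2
  have h1 := adjoint_isFormalAdjoint (hT := hdense) ⟨(x : H), hx'⟩ y
  rwa [pmap_congr hsa ⟨(x : H), hx'⟩ x.2, show (⟨(x:H), x.2⟩ : T.domain) = x from rfl] at h1

lemma mem_dom_of_sa (hsa : T.adjoint = T) (hdense : Dense (T.domain : Set H)) {y w : H}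
    (h : ∀ x : T.domain, ⟪w, (x : H)⟫_ℂ = ⟪y, (T x : H)⟫_ℂ) :
    ∃ hy : y ∈ T.domain, T ⟨y, hy⟩ = w := by
  have hy' : y ∈ T.adjoint.domain := T.mem_adjoint_domain_of_exists y ⟨w, h⟩
  have hval : T.adjoint ⟨y, hy'⟩ = w := adjoint_apply_eq hdense _ (fun x => h x)
  have hy : y ∈ T.domain := (congrArg LinearPMap.domain hsa) ▸ hy'
  exact ⟨hy, by rw [← pmap_congr hsa ⟨y, hy'⟩ hy]; exact hval⟩

lemma closed_of_sa (hsa : T.adjoint = T) (hdense : Dense (T.domain : Set H)) :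
    IsClosed (T.graph : Set (H × H)) := by
  have hset : (T.graph : Set (H × H)) =
      ⋂ x : T.domain, {p : H × H | ⟪p.2, (x : H)⟫_ℂ = ⟪p.1, (T x : H)⟫_ℂ} := by
    ext p
    simp only [Set.mem_iInter, Set.mem_setOf_eq, SetLike.mem_coe]
    constructor
    · intro hp x
      rw [T.mem_graph_iff] at hp
      obtain ⟨y, hy1, hy2⟩ := hp
      rw [← hy1, ← hy2]
      exact symm_of_sa hsa hdense y x
    · intro hp
      obtain ⟨hy, hval⟩ := mem_dom_of_sa hsa hdense (y := p.1) (w := p.2) hp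
      rw [T.mem_graph_iff]
      exact ⟨⟨p.1, hy⟩, rfl, hval⟩
  rw [hset]
  exact isClosed_iInter fun x => isClosed_eq
    (Continuous.inner continuous_snd continuous_const)
    (Continuous.inner continuous_fst continuous_const)

noncomputable def Lmu (T : H →ₗ.[ℂ] H) (μ : ℂ) : T.domain →ₗ[ℂ] H :=
  T.toFun + μ • T.domain.subtype

@[simp] lemma Lmu_apply (μ : ℂ) (x : T.domain) : Lmu T μ x = T x + μ • (x : H) := rfl

lemma inner_self_real (hsa : T.adjoint = T) (hdense : Dense (T.domain : Set H))
    (hsymm : ∀ x y : T.domain, ⟪(T x : H), (y : H)⟫_ℂ = ⟪(x : H), (T y : H)⟫_ℂ)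
    (x : T.domain) : (starRingEnd ℂ) ⟪(T x : H), (x : H)⟫_ℂ = ⟪(T x : H), (x : H)⟫_ℂ := by
  rw [inner_conj_symm]
  exact (hsymm x x).symm

lemma Lmu_norm_sq (hsa : T.adjoint = T) (hdense : Dense (T.domain : Set H))
    {μ : ℂ} (hμ : μ = Complex.I ∨ μ = -Complex.I) (x : T.domain) :
    ‖Lmu T μ x‖ ^ 2 = ‖(T x : H)‖ ^ 2 + ‖(x : H)‖ ^ 2 := by
  have hsymm := symm_of_sa hsa hdense
  have hre : RCLike.re ⟪(T x : H), μ • (x : H)⟫_ℂ = 0 := by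
    rw [inner_smul_right]
    have hreal := inner_self_real hsa hdense hsymm x
    set c := ⟪(T x : H), (x : H)⟫_ℂ
    have him : c.im = 0 := by
      have h2 := congrArg Complex.im hreal
      rw [Complex.conj_im] at h2
      linarith
    rcases hμ with h | h <;> subst h <;>
      simp [Complex.mul_re, him, Complex.I_re, Complex.I_im]
  have hnμ : ‖μ‖ = 1 := by rcases hμ with h | h <;> subst h <;> simp
  rw [show (Lmu T μ x) = (T x : H) + μ • (x : H) from rfl,
    @norm_add_sq ℂ _ _ _ _ (T x : H) (μ • (x : H)), hre, norm_smul, hnμ]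
  ring

lemma Lmu_le (hsa : T.adjoint = T) (hdense : Dense (T.domain : Set H))
    {μ : ℂ} (hμ : μ = Complex.I ∨ μ = -Complex.I) (x : T.domain) :
    ‖(x : H)‖ ≤ ‖Lmu T μ x‖ ∧ ‖(T x : H)‖ ≤ ‖Lmu T μ x‖ := by
  have h := Lmu_norm_sq hsa hdense hμ x
  constructor <;>
  · rw [← pow_le_pow_iff_left₀ (norm_nonneg _) (norm_nonneg _) (two_ne_zero)]
    nlinarith [sq_nonneg ‖(T x : H)‖, sq_nonneg ‖(x : H)‖]

lemma Lmu_surj (hsa : T.adjoint = T) (hdense : Dense (T.domain : Set H))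
    {μ : ℂ} (hμ : μ = Complex.I ∨ μ = -Complex.I) :
    Function.Surjective (Lmu T μ) := by
  set R := LinearMap.range (Lmu T μ) with hR
  have hclosedR : IsClosed (R : Set H) := by
    apply IsSeqClosed.isClosed
    intro u z hu hz
    choose x hx using hu
    have hxle : ∀ n m : ℕ, ‖(x n : H) - (x m : H)‖ ≤ ‖u n - u m‖ ∧
        ‖(T (x n) : H) - (T (x m) : H)‖ ≤ ‖u n - u m‖ := by
      intro n m
      have hsub : Lmu T μ (x n - x m) = u n - u m := by rw [_root_.map_sub, hx, hx]
      have h1 := Lmu_le hsa hdense hμ (x n - x m)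
      rw [hsub] at h1
      have e1 : ((x n - x m : T.domain) : H) = (x n : H) - (x m : H) := rfl
      have e2 : (T (x n - x m) : H) = (T (x n) : H) - (T (x m) : H) := T.map_sub _ _
      exact ⟨e1 ▸ h1.1, e2 ▸ h1.2⟩
    have hcu : CauchySeq u := hz.cauchySeq
    have key : ∀ (v : ℕ → H), (∀ n m, ‖v n - v m‖ ≤ ‖u n - u m‖) → CauchySeq v := by
      intro v hv
      rw [Metric.cauchySeq_iff] at hcu ⊢
      intro ε hε
      obtain ⟨N, hN⟩ := hcu ε hε
      refine ⟨N, fun n hn m hm => ?_⟩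
      have := hN n hn m hm
      rw [dist_eq_norm] at this ⊢
      exact lt_of_le_of_lt (hv n m) this
    obtain ⟨a, ha⟩ := cauchySeq_tendsto_of_complete (key _ (fun n m => (hxle n m).1))
    obtain ⟨b, hb⟩ := cauchySeq_tendsto_of_complete (key _ (fun n m => (hxle n m).2))
    have hgraph : (a, b) ∈ T.graph := by
      have hcl := closed_of_sa hsa hdense
      have htt : Filter.Tendsto (fun n => ((x n : H), (T (x n) : H)))
          Filter.atTop (nhds (a, b)) := ha.prodMk_nhds hb
      exact hcl.mem_of_tendsto htt (Filter.Eventually.of_forall fun n => T.mem_graph (x n))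
    rw [T.mem_graph_iff] at hgraph
    obtain ⟨y, hy1, hy2⟩ := hgraph
    have hlim : Filter.Tendsto u Filter.atTop (nhds (b + μ • a)) := by
      have : Filter.Tendsto (fun n => (T (x n) : H) + μ • (x n : H))
          Filter.atTop (nhds (b + μ • a)) := hb.add (ha.const_smul μ)
      rwa [show (fun n => (T (x n) : H) + μ • (x n : H)) = u from funext fun n => hx n] at this
    have hz2 : z = b + μ • a := tendsto_nhds_unique hz hlim
    exact ⟨y, by rw [Lmu_apply, hy2, hy1, hz2]⟩
  have horth : Rᗮ = ⊥ := by
    rw [Submodule.eq_bot_iff]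
    intro y hy
    rw [Submodule.mem_orthogonal] at hy
    have h1 : ∀ x : T.domain, ⟪y, (T x : H) + μ • (x : H)⟫_ℂ = 0 := by
      intro x
      have h0 : ⟪(T x : H) + μ • (x : H), y⟫_ℂ = 0 :=
        hy (Lmu T μ x) (LinearMap.mem_range_self _ x)
      rw [← inner_conj_symm, h0]
      simp
    have h2 : ∀ x : T.domain, ⟪(-(starRingEnd ℂ) μ) • y, (x : H)⟫_ℂ = ⟪y, (T x : H)⟫_ℂ := by
      intro x
      have h3 := h1 x
      rw [inner_add_right, inner_smul_right] at h3
      rw [inner_smul_left, _root_.map_neg, Complex.conj_conj]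
      linear_combination -h3
    obtain ⟨hy1, hy2⟩ := mem_dom_of_sa hsa hdense h2
    have hs := symm_of_sa hsa hdense ⟨y, hy1⟩ ⟨y, hy1⟩
    rw [hy2] at hs
    have hs2 : ((starRingEnd ℂ) μ - μ) * ⟪y, y⟫_ℂ = 0 := by
      have e : ((⟨y, hy1⟩ : T.domain) : H) = y := rfl
      rw [e, inner_smul_left, inner_smul_right, _root_.map_neg, Complex.conj_conj] at hs
      linear_combination hs
    have hμne : (starRingEnd ℂ) μ - μ ≠ 0 := by
      rcases hμ with h | h <;> subst h <;> simp [Complex.ext_iff, sub_eq_zero] <;> norm_num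
    exact inner_self_eq_zero.mp ((mul_eq_zero.mp hs2).resolve_left hμne)
  haveI : CompleteSpace R := hclosedR.completeSpace_coe
  have hRtop : R = ⊤ := by rwa [← Submodule.orthogonal_eq_bot_iff]
  intro z
  have hz : z ∈ R := hRtop ▸ Submodule.mem_top
  exact hz

end Helpers

/-- A self-adjoint operator that is `G`-invariant with respect to an irreducible unitary
representation is bounded and equals `i (λ-1)/(λ+1) · I` for some unimodular `λ ≠ -1`. -/
theorem selfAdjoint_GInvariant_irreducible_is_scalar {H : Type*} [NormedAddCommGroup H]
    [InnerProductSpace ℂ H] [CompleteSpace H] {G : Type*} [Group G]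
    (V : G →* (H ≃ₗᵢ[ℂ] H)) (hirr : IsIrreducibleRep V)
    (T : H →ₗ.[ℂ] H) (hdense : Dense (T.domain : Set H))
    (hsa : T.adjoint = T)
    (hinv : GInvariant V T) :
    ∃ lam : ℂ, ‖lam‖ = 1 ∧ lam ≠ -1 ∧ T.domain = ⊤ ∧
      ∀ x : T.domain, T x = (Complex.I * ((lam - 1) / (lam + 1))) • (x : H) := by
  rcases subsingleton_or_nontrivial H with hH | hH
  · have hdom : T.domain = ⊤ := by
      ext x
      simp only [Submodule.mem_top, iff_true]
      rw [Subsingleton.elim x 0]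
      exact T.domain.zero_mem
    exact ⟨1, by norm_num, by norm_num, hdom, fun x => Subsingleton.elim _ _⟩
  have hsymm := symm_of_sa hsa hdense
  -- a nonzero element of the domain
  obtain ⟨x₀, hx₀mem, hx₀ne⟩ : ∃ x ∈ T.domain, x ≠ (0 : H) := by
    by_contra h
    push_neg at h
    obtain ⟨y, hy⟩ := exists_ne (0 : H)
    have hsub : (T.domain : Set H) ⊆ {0} := fun x hx => h x hx
    have huniv : (Set.univ : Set H) ⊆ {0} := by
      rw [← hdense.closure_eq]
      exact closure_minimal hsub isClosed_singleton
    exact hy (huniv (Set.mem_univ y))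
  -- the Cayley transform
  have hsurjI := Lmu_surj hsa hdense (Or.inl rfl)
  have hinj : Function.Injective (Lmu T Complex.I) := by
    intro a b hab
    have h := (Lmu_le hsa hdense (Or.inl rfl) (a - b)).1
    rw [_root_.map_sub, hab, sub_self, norm_zero] at h
    have h0 : ((a - b : T.domain) : H) = 0 :=
      norm_eq_zero.mp (le_antisymm h (norm_nonneg _))
    have h1 : a - b = 0 := Subtype.ext h0
    exact sub_eq_zero.mp h1
  let e : T.domain ≃ₗ[ℂ] H := LinearEquiv.ofBijective (Lmu T Complex.I) ⟨hinj, hsurjI⟩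
  let U₀ : H →ₗ[ℂ] H := (Lmu T (-Complex.I)).comp e.symm.toLinearMap
  have hU₀ : ∀ x : T.domain, U₀ (Lmu T Complex.I x) = Lmu T (-Complex.I) x := by
    intro x
    show Lmu T (-Complex.I) (e.symm (Lmu T Complex.I x)) = Lmu T (-Complex.I) x
    congr 1
    exact e.symm_apply_apply x
  have hiso : ∀ z : H, ‖U₀ z‖ = ‖z‖ := by
    intro z
    obtain ⟨x, rfl⟩ := hsurjI z
    rw [hU₀]
    refine sq_norm_eq (norm_nonneg _) (norm_nonneg _) ?_
    rw [Lmu_norm_sq hsa hdense (Or.inl rfl) x, Lmu_norm_sq hsa hdense (Or.inr rfl) x]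
  let Ucl : H →L[ℂ] H := U₀.mkContinuous 1 (fun z => by rw [hiso z, one_mul])
  have hUclapp : ∀ z, Ucl z = U₀ z := fun z => rfl
  -- commutation with the representation
  have hUV : ∀ g : G, Wclm (V g) * Ucl = Ucl * Wclm (V g) := by
    intro g
    ext z
    simp only [ContinuousLinearMap.mul_apply, Wclm_apply]
    obtain ⟨x, rfl⟩ := hsurjI z
    obtain ⟨hgx, hgT⟩ := hinv g x
    have h1 : (V g) (Lmu T Complex.I x) = Lmu T Complex.I ⟨(V g) (x : H), hgx⟩ := by
      simp only [Lmu_apply]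
      rw [_root_.map_add, LinearIsometryEquiv.map_smul]
      congr 1
      exact hgT.symm
    have h2 : (V g) (Lmu T (-Complex.I) x) = Lmu T (-Complex.I) ⟨(V g) (x : H), hgx⟩ := by
      simp only [Lmu_apply]
      rw [_root_.map_add, LinearIsometryEquiv.map_smul]
      congr 1
      exact hgT.symm
    rw [hUclapp, hU₀, h2, h1, hUclapp, hU₀]
  have hWinv : ∀ g : G, star (Wclm (V g)) = Wclm (V g⁻¹) := by
    intro g
    rw [star_Wclm]
    congr 1
    rw [map_inv]
    rfl
  have hUVstar : ∀ g : G, Wclm (V g) * star Ucl = star Ucl * Wclm (V g) := by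
    intro g
    have h := congrArg star (hUV g⁻¹)
    rw [star_mul, star_mul, hWinv, inv_inv] at h
    exact h.symm
  -- Schur's lemma applied to the real and imaginary parts
  let A₁ : H →L[ℂ] H := Ucl + star Ucl
  let A₂ : H →L[ℂ] H := Complex.I • (star Ucl - Ucl)
  have hA₁sa : IsSelfAdjoint A₁ := by
    show star _ = _
    rw [star_add, star_star, add_comm]
  have hA₂sa : IsSelfAdjoint A₂ := by
    show star _ = _
    rw [star_smul, star_sub, star_star, Complex.star_def, Complex.conj_I, neg_smul, ← smul_neg,
      neg_sub]
  obtain ⟨r₁, hr₁⟩ := schur V hirr A₁ hA₁sa (fun g => by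
    show Wclm (V g) * (Ucl + star Ucl) = (Ucl + star Ucl) * Wclm (V g)
    rw [mul_add, hUV g, hUVstar g, add_mul])
  obtain ⟨r₂, hr₂⟩ := schur V hirr A₂ hA₂sa (fun g => by
    show Wclm (V g) * (Complex.I • (star Ucl - Ucl)) = (Complex.I • (star Ucl - Ucl)) * Wclm (V g)
    rw [mul_smul_comm, smul_mul_assoc, mul_sub, sub_mul, hUV g, hUVstar g])
  set lamC : ℂ := (2:ℂ)⁻¹ * ((r₁ : ℂ) + Complex.I * (r₂ : ℂ)) with hlamCdef
  have hUlam : Ucl = lamC • 1 := by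
    have h2 : (2:ℂ) • Ucl = A₁ + Complex.I • A₂ := by
      show (2:ℂ) • Ucl = (Ucl + star Ucl) + Complex.I • (Complex.I • (star Ucl - Ucl))
      rw [smul_smul, Complex.I_mul_I]
      module
    calc Ucl = (2:ℂ)⁻¹ • ((2:ℂ) • Ucl) := by rw [smul_smul]; norm_num
      _ = (2:ℂ)⁻¹ • ((r₁:ℂ) • (1 : H →L[ℂ] H) + Complex.I • ((r₂:ℂ) • (1 : H →L[ℂ] H))) := by
          rw [h2, hr₁, hr₂]
      _ = lamC • 1 := by rw [hlamCdef]; module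
  have happ : ∀ z : H, Ucl z = lamC • z := by
    intro z
    rw [hUlam]
    simp
  have hline : ∀ x : T.domain, lamC • ((T x : H) + Complex.I • (x : H))
      = (T x : H) + (-Complex.I) • (x : H) := by
    intro x
    have h := happ (Lmu T Complex.I x)
    rw [hUclapp, hU₀] at h
    simpa only [Lmu_apply] using h.symm
  have hlamne1 : lamC ≠ 1 := by
    intro h
    have h1 := hline ⟨x₀, hx₀mem⟩
    rw [h, one_smul] at h1
    have e0 : ((⟨x₀, hx₀mem⟩ : T.domain) : H) = x₀ := rfl
    rw [e0] at h1
    have h2 : ((2:ℂ) * Complex.I) • x₀ = 0 := by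
      linear_combination (norm := module) h1
    rcases smul_eq_zero.mp h2 with h3 | h3
    · exact (by simp [Complex.ext_iff] at h3 : False)
    · exact hx₀ne h3
  have h1ne : (1 : ℂ) - lamC ≠ 0 := sub_ne_zero.mpr (Ne.symm hlamne1)
  set c : ℂ := (1 - lamC)⁻¹ * (Complex.I * (1 + lamC)) with hcdef
  have hc : ∀ x : T.domain, (T x : H) = c • (x : H) := by
    intro x
    have h2 : (1 - lamC) • (T x : H) = (Complex.I * (1 + lamC)) • (x : H) := by
      linear_combination (norm := module) (-1 : ℂ) • hline x
    have h3 := congrArg (fun v => (1 - lamC)⁻¹ • v) h2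
    simp only [smul_smul] at h3
    rw [inv_mul_cancel₀ h1ne, one_smul] at h3
    exact h3
  -- c is real
  have hcreal : (starRingEnd ℂ) c = c := by
    have hs := hsymm ⟨x₀, hx₀mem⟩ ⟨x₀, hx₀mem⟩
    rw [hc ⟨x₀, hx₀mem⟩] at hs
    have e0 : ((⟨x₀, hx₀mem⟩ : T.domain) : H) = x₀ := rfl
    rw [e0, inner_smul_left, inner_smul_right] at hs
    have hx0 : ⟪x₀, x₀⟫_ℂ ≠ 0 := fun h => hx₀ne (inner_self_eq_zero.mp h)
    exact mul_right_cancel₀ hx0 hs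
  have him : c.im = 0 := by
    have h2 := congrArg Complex.im hcreal
    rw [Complex.conj_im] at h2
    linarith
  -- the domain is everything
  have hdomtop : T.domain = ⊤ := by
    rw [eq_top_iff]
    intro y _
    have h := mem_dom_of_sa hsa hdense (y := y) (w := (starRingEnd ℂ) c • y) (fun x => by
      rw [inner_smul_left, Complex.conj_conj, hc x, inner_smul_right])
    exact h.1
  -- final scalar
  refine ⟨(c + Complex.I) / (Complex.I - c), ?_, ?_, hdomtop, ?_⟩
  · have hIc : Complex.I - c ≠ 0 := by
      intro h
      have h2 := congrArg Complex.im h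
      simp [him] at h2
    rw [norm_div, div_eq_one_iff_eq (norm_ne_zero_iff.mpr hIc)]
    rw [Complex.norm_def, Complex.norm_def]
    congr 1
    simp only [Complex.normSq_apply, Complex.add_re, Complex.add_im, Complex.sub_re,
      Complex.sub_im, Complex.I_re, Complex.I_im, him]
    ring
  · intro h
    have hIc : Complex.I - c ≠ 0 := by
      intro h2
      have h3 := congrArg Complex.im h2
      simp [him] at h3
    have h2 := (div_eq_iff hIc).mp h
    have h3 : (2:ℂ) * Complex.I = 0 := by linear_combination h2
    simp [Complex.ext_iff] at h3
  · intro x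
    have hIc : Complex.I - c ≠ 0 := by
      intro h2
      have h3 := congrArg Complex.im h2
      simp [him] at h3
    have heq : Complex.I * (((c + Complex.I) / (Complex.I - c) - 1)
        / ((c + Complex.I) / (Complex.I - c) + 1)) = c := by
      have hden : c + Complex.I + (Complex.I - c) ≠ 0 := by
        intro h2
        have h3 : (2:ℂ) * Complex.I = 0 := by linear_combination h2
        simp [Complex.ext_iff] at h3
      have hdd : ∀ (a b d : ℂ), d ≠ 0 → b ≠ 0 → (a / d) / (b / d) = a / b := by
        intro a b d hd hb
        field_simp
      rw [div_sub_one hIc, div_add_one hIc, hdd _ _ _ hIc hden,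
        show c + Complex.I - (Complex.I - c) = 2 * c from by ring,
        show c + Complex.I + (Complex.I - c) = 2 * Complex.I from by ring]
      have h2I : (2 : ℂ) * Complex.I ≠ 0 := by simp [Complex.ext_iff]
      rw [mul_div_assoc', div_eq_iff h2I]
      ring
    rw [heq]
    exact hc x
end

section
/- Let U be a unitary on L²(∂Ω) with spectral gap at -1 whose restriction U₊ to H^{1/2}(∂Ω) is well-defined, continuous in the 1/2-Sobolev norm, and has pure point spectrum σ(U₊) = σ_p(U₊). Then the partial Cayley transform A_U = i P_{W⊥}(U - I)(U + I)⁻¹ and the orthogonal projection P_W onto the eigenspace W = ker(U + I) both leave H^{1/2}(∂Ω) invariant and are continuous with respect to the Sobolev 1/2-norm; in particular U is admissible. -/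
open scoped InnerProductSpace
open Complex Metric Set

namespace PCAux

variable {F G : Type*} [NormedAddCommGroup F] [NormedSpace ℂ F]
    [NormedAddCommGroup G] [NormedSpace ℂ G] [CompleteSpace F] [CompleteSpace G]

theorem clm_circleIntegral (L : F →L[ℂ] G) {f : ℂ → F} {c : ℂ} {R : ℝ} (hR : 0 ≤ R)
    (hf : ContinuousOn f (sphere c R)) :
    L (∮ z in C(c, R), f z) = ∮ z in C(c, R), L (f z) := by
  have h1 : Continuous fun θ : ℝ => deriv (circleMap c R) θ :=
    by simp only [deriv_circleMap]; exact (continuous_circleMap 0 R).mul continuous_const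
  have hcont : Continuous fun θ : ℝ => deriv (circleMap c R) θ • f (circleMap c R θ) :=
    h1.smul (hf.comp_continuous (continuous_circleMap c R) fun θ => circleMap_mem_sphere c hR θ)
  rw [circleIntegral, circleIntegral,
    ← L.intervalIntegral_comp_comm (hcont.intervalIntegrable _ _)]
  simp only [map_smul]

theorem circleIntegral_apply {Φ : ℂ → F →L[ℂ] G} {c : ℂ} {R : ℝ} (hR : 0 ≤ R)
    (hΦ : ContinuousOn Φ (sphere c R)) (x : F) :
    (∮ z in C(c, R), Φ z) x = ∮ z in C(c, R), Φ z x := by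
  have h1 : Continuous fun θ : ℝ => deriv (circleMap c R) θ :=
    by simp only [deriv_circleMap]; exact (continuous_circleMap 0 R).mul continuous_const
  have hcont : Continuous fun θ : ℝ => deriv (circleMap c R) θ • Φ (circleMap c R θ) :=
    h1.smul (hΦ.comp_continuous (continuous_circleMap c R) fun θ => circleMap_mem_sphere c hR θ)
  rw [circleIntegral, circleIntegral,
    ContinuousLinearMap.intervalIntegral_apply (hcont.intervalIntegrable _ _)]
  simp only [ContinuousLinearMap.smul_apply]

theorem contOn_piecewise {ε : ℝ} (hε : 0 < ε) {s : Set ℂ}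
    (hs : ∀ z ∈ s, z = -1 ∨ ε ≤ ‖z + 1‖) (c : ℂ) {h : ℂ → ℂ}
    (hh : ∀ z : ℂ, ε ≤ ‖z + 1‖ → ContinuousAt h z) :
    ContinuousOn (fun z => if ‖z + 1‖ < ε / 2 then c else h z) s := by
  intro z hz
  rcases hs z hz with rfl | hz'
  · have heq : (fun w => if ‖w + 1‖ < ε / 2 then c else h w) =ᶠ[nhdsWithin (-1:ℂ) s]
        (fun _ => c) := by
      have hmem : Metric.ball (-1 : ℂ) (ε / 2) ∈ nhdsWithin (-1 : ℂ) s :=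
      nhdsWithin_le_nhds (ball_mem_nhds _ (by positivity))
      filter_upwards [hmem, self_mem_nhdsWithin] with w hw hws
      rcases hs w hws with rfl | hfar
      · norm_num [hε]
      · exfalso
        rw [mem_ball, dist_eq_norm] at hw
        have : w - -1 = w + 1 := by ring
        rw [this] at hw
        linarith
    exact continuousWithinAt_const.congr_of_eventuallyEq heq (by norm_num [hε])
  · have hev : ∀ᶠ w in nhds z, h w = (if ‖w + 1‖ < ε / 2 then c else h w) := by
      filter_upwards [Metric.ball_mem_nhds z (by positivity : (0:ℝ) < ε / 2)] with w hw
      rw [if_neg]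
      push_neg
      rw [mem_ball, dist_eq_norm] at hw
      have h2 : ‖z + 1‖ ≤ ‖z - w‖ + ‖w + 1‖ := by
        calc ‖z + 1‖ = ‖(z - w) + (w + 1)‖ := by ring_nf
        _ ≤ ‖z - w‖ + ‖w + 1‖ := norm_add_le _ _
      have h3 : ‖z - w‖ < ε / 2 := by rwa [norm_sub_rev]
      linarith
    exact ((hh z hz').congr hev).continuousWithinAt

variable {E : Type*} [NormedAddCommGroup E] [InnerProductSpace ℂ E] [CompleteSpace E]

set_option maxHeartbeats 1000000 in
theorem key (U : E →L[ℂ] E) (hUn : IsStarNormal U) {ε : ℝ} (hε : 0 < ε) (hε1 : ε ≤ 1)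
    (hσ : ∀ μ ∈ spectrum ℂ U, μ = -1 ∨ ε ≤ ‖μ + 1‖) :
    ∃ Q B : E →L[ℂ] E,
      star Q = Q ∧
      (∀ x, (U + 1) (Q x) = 0) ∧
      (∀ x, (U + 1) x = 0 → Q x = x) ∧
      ((U + 1) * B = 1 - Q) ∧
      (∀ w ∈ sphere (-1 : ℂ) (ε / 2), IsUnit (algebraMap ℂ (E →L[ℂ] E) w - U)) ∧
      (∀ v : E, (∮ z in C(-1, ε / 2), resolvent U z v) = (2 * Real.pi * Complex.I) • Q v) ∧
      (∀ v : E, (∮ z in C(-1, ε / 2), (z + 1)⁻¹ • resolvent U z ((1 - Q) v))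
          = -((2 * Real.pi * Complex.I) • B v)) := by
  set f : ℂ → ℂ := fun z => ((max (1 - 2 / ε * ‖z + 1‖) 0 : ℝ) : ℂ) with hf_def
  set b : ℂ → ℂ := fun z => if ‖z + 1‖ < ε / 2 then 0 else (z + 1)⁻¹ with hb_def
  set k : ℂ → ℂ → ℂ := fun w z => if ‖z + 1‖ < ε / 2 then (w - 1)⁻¹ else (w - z)⁻¹ with hk_def
  set vf : ℂ → ℂ := fun z => z + 2 * f z with hvf_def
  set rh : ℂ → ℂ → ℂ := fun w z => (w + 1)⁻¹ * f z + k w z * (1 - f z) with hrh_def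
  -- pointwise facts about f
  have hfm1 : f (-1) = 1 := by simp [hf_def]
  have hffar : ∀ z : ℂ, ε / 2 ≤ ‖z + 1‖ → f z = 0 := by
    intro z hz
    have h1 : (1 : ℝ) ≤ 2 / ε * ‖z + 1‖ := by
      calc (1 : ℝ) = 2 / ε * (ε / 2) := by field_simp
      _ ≤ 2 / ε * ‖z + 1‖ := mul_le_mul_of_nonneg_left hz (le_of_lt (by positivity))
    simp only [hf_def]
    rw [max_eq_right (by linarith)]
    simp
  have hfar_ne : ∀ z : ℂ, ε ≤ ‖z + 1‖ → z + 1 ≠ 0 := by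
    intro z hz h0
    rw [h0] at hz; simp at hz; linarith
  have hwz_ne : ∀ w z : ℂ, ‖w + 1‖ ≤ ε / 2 → ε ≤ ‖z + 1‖ → w - z ≠ 0 := by
    intro w z hw hz h0
    have h2 : ‖z + 1‖ ≤ ‖w - z‖ + ‖w + 1‖ := by
      calc ‖z + 1‖ = ‖(w + 1) - (w - z)‖ := by ring_nf
      _ ≤ ‖w + 1‖ + ‖w - z‖ := norm_sub_le _ _
      _ = ‖w - z‖ + ‖w + 1‖ := by ring
    rw [h0] at h2; simp only [norm_zero, zero_add] at h2; linarith
  have hcase : ∀ z ∈ spectrum ℂ U,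
      z = -1 ∨ (ε ≤ ‖z + 1‖ ∧ f z = 0 ∧ ¬(‖z + 1‖ < ε / 2) ∧ z + 1 ≠ 0) := by
    intro z hz
    rcases hσ z hz with rfl | h
    · exact Or.inl rfl
    · exact Or.inr ⟨h, hffar z (by linarith), by push_neg; linarith, hfar_ne z h⟩
  -- continuity
  have hfC : Continuous f := by
    apply Complex.continuous_ofReal.comp
    exact (continuous_const.sub (continuous_const.mul
      ((continuous_id.add continuous_const).norm))).max continuous_const
  have hfc : ContinuousOn f (spectrum ℂ U) := hfC.continuousOn
  have hvfc : ContinuousOn vf (spectrum ℂ U) :=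
    (continuous_id.add (continuous_const.mul hfC)).continuousOn
  have hbc : ContinuousOn b (spectrum ℂ U) := by
    refine contOn_piecewise hε hσ 0 (fun z hz => ?_)
    exact ContinuousAt.inv₀ (by fun_prop) (hfar_ne z hz)
  have hkc : ∀ w : ℂ, ‖w + 1‖ ≤ ε / 2 → ContinuousOn (k w) (spectrum ℂ U) := by
    intro w hw
    refine contOn_piecewise hε hσ _ (fun z hz => ?_)
    exact ContinuousAt.inv₀ (by fun_prop) (hwz_ne w z hw hz)
  have hrhc : ∀ w : ℂ, ‖w + 1‖ ≤ ε / 2 → ContinuousOn (rh w) (spectrum ℂ U) := fun w hw =>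
    (continuousOn_const.mul hfc).add ((hkc w hw).mul (continuousOn_const.sub hfc))
  -- basic operator identities
  have halgV : ∀ w : ℂ, algebraMap ℂ (E →L[ℂ] E) w - cfc vf U = cfc (fun z => w - vf z) U := by
    intro w
    rw [cfc_sub (fun _ => w) vf U continuousOn_const hvfc, cfc_const w U]
  have hU1 : U + 1 = cfc (fun z : ℂ => z + 1) U := by
    rw [cfc_add (a := U) (fun z : ℂ => z) (fun _ : ℂ => (1:ℂ)) continuousOn_id continuousOn_const,
      cfc_const 1 U, cfc_id' ℂ U, map_one]
  have h1mQ : (1 : E →L[ℂ] E) - cfc f U = cfc (fun z => 1 - f z) U := by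
    rw [cfc_sub (fun _ => (1:ℂ)) f U continuousOn_const hfc, cfc_const 1 U, map_one]
  have hQQ : cfc f U * cfc f U = cfc f U := by
    rw [← cfc_mul f f U hfc hfc]
    refine cfc_congr fun z hz => ?_
    rcases hcase z hz with rfl | ⟨_, h2, _, _⟩
    · simp [hfm1]
    · simp [h2]
  have hstarQ : star (cfc f U) = cfc f U := by
    rw [← cfc_star f U]
    exact cfc_congr fun z _ => by simp [hf_def]
  have hU1Q : (U + 1) * cfc f U = 0 := by
    rw [hU1, ← cfc_mul _ f U (by fun_prop) hfc]
    have h0 : cfc (fun z : ℂ => (z + 1) * f z) U = cfc (fun _ : ℂ => (0 : ℂ)) U := by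
      refine cfc_congr fun z hz => ?_
      rcases hcase z hz with rfl | ⟨_, h2, _, _⟩
      · simp
      · simp [h2]
    rw [h0, cfc_const 0 U, map_zero]
  have hfix : ∀ x, (U + 1) x = 0 → cfc f U x = x := by
    intro x hx
    have h1 : cfc f U - 1 = cfc (fun z => f z - 1) U := by
      rw [cfc_sub f (fun _ => (1:ℂ)) U hfc continuousOn_const, cfc_const 1 U, map_one]
    have h2 : cfc (fun z => f z - 1) U = cfc (fun z => -(b z) * (z + 1)) U := by
      refine cfc_congr fun z hz => ?_
      rcases hcase z hz with rfl | ⟨_, h2, h3, h4⟩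
      · simp [hfm1]
      · rw [hb_def]
        simp only [if_neg h3, h2]
        field_simp
        ring
    have h3 : cfc (fun z => -(b z) * (z + 1)) U = cfc (fun z => -(b z)) U * (U + 1) := by
      rw [cfc_mul (fun z => -(b z)) (fun z => z + 1) U hbc.neg (by fun_prop), hU1]
    have h4 := congrArg (fun T : E →L[ℂ] E => T x) (h1.trans (h2.trans h3))
    simp only [ContinuousLinearMap.sub_apply, ContinuousLinearMap.one_apply,
      ContinuousLinearMap.mul_apply, hx, map_zero] at h4
    exact sub_eq_zero.mp h4
  have halgU : ∀ w : ℂ, algebraMap ℂ (E →L[ℂ] E) w - U = cfc (fun z : ℂ => w - z) U := by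
    intro w
    rw [cfc_sub (fun _ => w) (fun z : ℂ => z) U continuousOn_const continuousOn_id,
      cfc_const w U, cfc_id' ℂ U]
  have hB1 : (U + 1) * cfc b U = 1 - cfc f U := by
    rw [hU1, ← cfc_mul _ b U (by fun_prop) hbc, h1mQ]
    refine cfc_congr fun z hz => ?_
    rcases hcase z hz with rfl | ⟨h1', hf0, hlt, hne⟩
    · rw [hb_def]; simp [hfm1]
    · rw [hb_def]; simp only [if_neg hlt, hf0, sub_zero]; exact mul_inv_cancel₀ hne
  -- units for V := cfc vf U
  have hVuval : ∀ w : ℂ, ‖w + 1‖ ≤ ε / 2 →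
      (algebraMap ℂ (E →L[ℂ] E) w - cfc vf U) * cfc (k w) U = 1 ∧
      cfc (k w) U * (algebraMap ℂ (E →L[ℂ] E) w - cfc vf U) = 1 := by
    intro w hw
    have hne1 : w - 1 ≠ 0 := by
      intro h0
      rw [sub_eq_zero] at h0
      subst h0
      norm_num at hw
      linarith
    have hkey : ∀ z ∈ spectrum ℂ U, (w - vf z) * k w z = 1 := by
      intro z hz
      rcases hcase z hz with rfl | ⟨h1', hf0, hlt, hne⟩
      · have hvf1 : vf (-1) = 1 := by rw [hvf_def]; simp [hfm1]; ring
        rw [hvf1, hk_def]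
        simp only []
        rw [if_pos (by simpa using (by positivity : (0:ℝ) < ε / 2))]
        exact mul_inv_cancel₀ hne1
      · have hne2 : w - z ≠ 0 := hwz_ne w z hw h1'
        rw [hvf_def, hk_def]
        simp only [hf0, mul_zero, add_zero, if_neg hlt]
        exact mul_inv_cancel₀ hne2
    constructor
    · rw [halgV w, ← cfc_mul (fun z => w - vf z) (k w) U (continuousOn_const.sub hvfc) (hkc w hw)]
      have h0 : cfc (fun z => (w - vf z) * k w z) U = cfc (fun _ : ℂ => (1:ℂ)) U :=
        cfc_congr hkey
      rw [h0, cfc_const 1 U, map_one]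
    · rw [halgV w, ← cfc_mul (k w) (fun z => w - vf z) U (hkc w hw) (continuousOn_const.sub hvfc)]
      have h0 : cfc (fun z => k w z * (w - vf z)) U = cfc (fun _ : ℂ => (1:ℂ)) U :=
        cfc_congr fun z hz => by rw [mul_comm]; exact hkey z hz
      rw [h0, cfc_const 1 U, map_one]
  have hVunit : ∀ w : ℂ, ‖w + 1‖ ≤ ε / 2 →
      IsUnit (algebraMap ℂ (E →L[ℂ] E) w - cfc vf U) :=
    fun w hw => ⟨⟨_, cfc (k w) U, (hVuval w hw).1, (hVuval w hw).2⟩, rfl⟩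
  have hVres : ∀ w : ℂ, ‖w + 1‖ ≤ ε / 2 → resolvent (cfc vf U) w = cfc (k w) U := by
    intro w hw
    have hu := hVunit w hw
    calc resolvent (cfc vf U) w
        = Ring.inverse (algebraMap ℂ (E →L[ℂ] E) w - cfc vf U) := rfl
      _ = Ring.inverse (algebraMap ℂ (E →L[ℂ] E) w - cfc vf U) *
            ((algebraMap ℂ (E →L[ℂ] E) w - cfc vf U) * cfc (k w) U) := by
          rw [(hVuval w hw).1, mul_one]
      _ = (Ring.inverse (algebraMap ℂ (E →L[ℂ] E) w - cfc vf U) *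
            (algebraMap ℂ (E →L[ℂ] E) w - cfc vf U)) * cfc (k w) U := by rw [mul_assoc]
      _ = cfc (k w) U := by rw [Ring.inverse_mul_cancel _ hu, one_mul]
  -- units for U on the sphere
  have hsph : ∀ w ∈ sphere (-1:ℂ) (ε/2), ‖w + 1‖ = ε/2 := by
    intro w hw
    have h0 := mem_sphere_iff_norm.mp hw
    rwa [sub_neg_eq_add] at h0
  have hUuval : ∀ w ∈ sphere (-1:ℂ) (ε/2),
      (algebraMap ℂ (E →L[ℂ] E) w - U) * cfc (rh w) U = 1 ∧
      cfc (rh w) U * (algebraMap ℂ (E →L[ℂ] E) w - U) = 1 := by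
    intro w hw
    have hw2 : ‖w + 1‖ ≤ ε / 2 := le_of_eq (hsph w hw)
    have hwne : w + 1 ≠ 0 := by
      intro h0
      have h1 := hsph w hw
      rw [h0, norm_zero] at h1
      linarith
    have hkey : ∀ z ∈ spectrum ℂ U, (w - z) * rh w z = 1 := by
      intro z hz
      rcases hcase z hz with rfl | ⟨h1', hf0, hlt, hne⟩
      · rw [hrh_def, hk_def]
        simp only [hfm1]
        rw [if_pos (by simpa using (by positivity : (0:ℝ) < ε / 2))]
        have hww : w - -1 = w + 1 := by ring
        rw [hww]
        field_simp
        ring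
      · have hne2 : w - z ≠ 0 := hwz_ne w z hw2 h1'
        rw [hrh_def, hk_def]
        simp only [hf0, if_neg hlt, mul_zero, zero_add, sub_zero, mul_one]
        exact mul_inv_cancel₀ hne2
    constructor
    · rw [halgU w, ← cfc_mul _ _ U ((by fun_prop : ContinuousOn (fun z : ℂ => w - z) (spectrum ℂ U))) (hrhc w hw2)]
      have h0 : cfc (fun z => (w - z) * rh w z) U = cfc (fun _ : ℂ => (1:ℂ)) U :=
        cfc_congr hkey
      rw [h0, cfc_const 1 U, map_one]
    · rw [halgU w, ← cfc_mul _ _ U (hrhc w hw2) ((by fun_prop : ContinuousOn (fun z : ℂ => w - z) (spectrum ℂ U)))]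
      have h0 : cfc (fun z => rh w z * (w - z)) U = cfc (fun _ : ℂ => (1:ℂ)) U :=
        cfc_congr fun z hz => by rw [mul_comm]; exact hkey z hz
      rw [h0, cfc_const 1 U, map_one]
  have hUunit : ∀ w ∈ sphere (-1:ℂ) (ε/2), IsUnit (algebraMap ℂ (E →L[ℂ] E) w - U) :=
    fun w hw => ⟨⟨_, cfc (rh w) U, (hUuval w hw).1, (hUuval w hw).2⟩, rfl⟩
  have hUres : ∀ w ∈ sphere (-1:ℂ) (ε/2), resolvent U w = cfc (rh w) U := by
    intro w hw
    have hu := hUunit w hw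
    calc resolvent U w
        = Ring.inverse (algebraMap ℂ (E →L[ℂ] E) w - U) := rfl
      _ = Ring.inverse (algebraMap ℂ (E →L[ℂ] E) w - U) *
            ((algebraMap ℂ (E →L[ℂ] E) w - U) * cfc (rh w) U) := by
          rw [(hUuval w hw).1, mul_one]
      _ = (Ring.inverse (algebraMap ℂ (E →L[ℂ] E) w - U) *
            (algebraMap ℂ (E →L[ℂ] E) w - U)) * cfc (rh w) U := by rw [mul_assoc]
      _ = cfc (rh w) U := by rw [Ring.inverse_mul_cancel _ hu, one_mul]
  -- splitting of the resolvent
  have hsplitop : ∀ w ∈ sphere (-1:ℂ) (ε/2),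
      resolvent U w = (w + 1)⁻¹ • cfc f U + cfc (k w) U * (1 - cfc f U) := by
    intro w hw
    have hw2 : ‖w + 1‖ ≤ ε / 2 := le_of_eq (hsph w hw)
    rw [hUres w hw, h1mQ, ← cfc_mul (k w) (fun z => 1 - f z) U (hkc w hw2) (continuousOn_const.sub hfc),
      ← cfc_const_mul ((w+1)⁻¹) f U hfc,
      ← cfc_add (a := U) (fun z => (w+1)⁻¹ * f z) (fun z => k w z * (1 - f z))
        (continuousOn_const.mul hfc) ((hkc w hw2).mul (continuousOn_const.sub hfc))]
  have hVm1 : resolvent (cfc vf U) (-1 : ℂ) * (1 - cfc f U) = -(cfc b U) := by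
    have h0 : ‖(-1 : ℂ) + 1‖ ≤ ε/2 := by simpa using (by positivity : (0:ℝ) ≤ ε / 2)
    have hr := hVres (-1) h0
    rw [hr, h1mQ, ← cfc_mul (k (-1)) (fun z => 1 - f z) U (hkc (-1) h0) (continuousOn_const.sub hfc),
      ← cfc_neg b U]
    refine cfc_congr fun z hz => ?_
    rcases hcase z hz with rfl | ⟨h1', hf0, hlt, hne⟩
    · rw [hk_def, hb_def]
      simp only [hfm1]
      rw [if_pos (by simpa using (by positivity : (0:ℝ) < ε / 2)),
        if_pos (by simpa using (by positivity : (0:ℝ) < ε / 2))]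
      ring
    · rw [hk_def, hb_def]
      simp only [if_neg hlt, hf0, sub_zero, mul_one]
      rw [show (-1 : ℂ) - z = -(z+1) by ring, inv_neg]
  -- differentiability of the V-resolvent
  have hVmem : ∀ z : ℂ, z ∈ closedBall (-1:ℂ) (ε/2) → ‖z+1‖ ≤ ε/2 := by
    intro z hz
    have h0 := mem_closedBall_iff_norm.mp hz
    rwa [sub_neg_eq_add] at h0
  have hResDiff : ∀ (y : E), ∀ z ∈ closedBall (-1:ℂ) (ε/2),
      DifferentiableAt ℂ (fun u => resolvent (cfc vf U) u y) z := by
    intro y z hz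
    have hz' : z ∈ resolventSet ℂ (cfc vf U) :=
      spectrum.mem_resolventSet_iff.mpr (hVunit z (hVmem z hz))
    exact ((spectrum.hasDerivAt_resolvent hz').differentiableAt).clm_apply
      (differentiableAt_const y)
  -- first circle integral
  have hF2 : ∀ v : E, (∮ z in C(-1, ε/2), resolvent U z v)
      = (2 * Real.pi * Complex.I) • cfc f U v := by
    intro v
    set G : ℂ → E :=
      fun z => cfc f U v + (z + 1) • (resolvent (cfc vf U) z ((1 - cfc f U) v)) with hG_def
    have hGd : ∀ z ∈ closedBall (-1:ℂ) (ε/2), DifferentiableAt ℂ G z := by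
      intro z hz
      exact (differentiableAt_const _).add
        ((differentiableAt_id.add (differentiableAt_const 1)).smul (hResDiff _ z hz))
    have hcG : ContinuousOn G (closedBall (-1:ℂ) (ε/2)) :=
      fun z hz => ((hGd z hz).continuousAt).continuousWithinAt
    have hCauchy := Complex.circleIntegral_sub_inv_smul_of_differentiable_on_off_countable
      (s := (∅ : Set ℂ)) countable_empty (mem_ball_self (by positivity)) hcG
      (fun x hx => hGd x (ball_subset_closedBall hx.1))
    have hEq : EqOn (fun z => resolvent U z v) (fun z => (z - (-1))⁻¹ • G z)
        (sphere (-1:ℂ) (ε/2)) := by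
      intro z hz
      have hzn : ‖z + 1‖ = ε/2 := hsph z hz
      have hz0 : z + 1 ≠ 0 := by
        intro h0; rw [h0, norm_zero] at hzn; linarith
      have hz2 : ‖z+1‖ ≤ ε/2 := le_of_eq hzn
      simp only [hG_def]
      rw [hsplitop z hz, ← hVres z hz2, sub_neg_eq_add]
      simp only [ContinuousLinearMap.add_apply, ContinuousLinearMap.smul_apply,
        ContinuousLinearMap.mul_apply, smul_add, smul_smul]
      rw [inv_mul_cancel₀ hz0, one_smul]
    calc (∮ z in C(-1, ε/2), resolvent U z v)
        = ∮ z in C(-1, ε/2), (z - (-1))⁻¹ • G z :=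
          circleIntegral.integral_congr (by positivity) hEq
      _ = (2 * Real.pi * Complex.I : ℂ) • G (-1) := hCauchy
      _ = (2 * Real.pi * Complex.I) • cfc f U v := by
          rw [hG_def]
          simp
  -- second circle integral
  have hF3 : ∀ v : E, (∮ z in C(-1, ε/2), (z + 1)⁻¹ • resolvent U z ((1 - cfc f U) v))
      = -((2 * Real.pi * Complex.I) • cfc b U v) := by
    intro v
    set w0 : E := (1 - cfc f U) v with hw0_def
    set G : ℂ → E := fun z => resolvent (cfc vf U) z w0 with hG_def
    have hGd : ∀ z ∈ closedBall (-1:ℂ) (ε/2), DifferentiableAt ℂ G z :=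
      fun z hz => hResDiff w0 z hz
    have hcG : ContinuousOn G (closedBall (-1:ℂ) (ε/2)) :=
      fun z hz => ((hGd z hz).continuousAt).continuousWithinAt
    have hCauchy := Complex.circleIntegral_sub_inv_smul_of_differentiable_on_off_countable
      (s := (∅ : Set ℂ)) countable_empty (mem_ball_self (by positivity)) hcG
      (fun x hx => hGd x (ball_subset_closedBall hx.1))
    have hQw0 : cfc f U w0 = 0 := by
      have h0 := congrArg (fun T : E →L[ℂ] E => T v) hQQ
      simp only [ContinuousLinearMap.mul_apply] at h0
      rw [hw0_def]
      simp only [ContinuousLinearMap.sub_apply, ContinuousLinearMap.one_apply, map_sub, h0,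
        sub_self]
    have h1Qw0 : (1 - cfc f U) w0 = w0 := by
      simp only [ContinuousLinearMap.sub_apply, ContinuousLinearMap.one_apply, hQw0, sub_zero]
    have hEq : EqOn (fun z => (z + 1)⁻¹ • resolvent U z w0) (fun z => (z - (-1))⁻¹ • G z)
        (sphere (-1:ℂ) (ε/2)) := by
      intro z hz
      have hz2 : ‖z+1‖ ≤ ε/2 := le_of_eq (hsph z hz)
      simp only [hG_def]
      rw [sub_neg_eq_add]
      congr 1
      rw [hsplitop z hz, ← hVres z hz2]
      simp only [ContinuousLinearMap.add_apply, ContinuousLinearMap.smul_apply,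
        ContinuousLinearMap.mul_apply, hQw0, h1Qw0, smul_zero, zero_add]
    calc (∮ z in C(-1, ε/2), (z + 1)⁻¹ • resolvent U z ((1 - cfc f U) v))
        = ∮ z in C(-1, ε/2), (z - (-1))⁻¹ • G z :=
          circleIntegral.integral_congr (by positivity) hEq
      _ = (2 * Real.pi * Complex.I : ℂ) • G (-1) := hCauchy
      _ = -((2 * Real.pi * Complex.I) • cfc b U v) := by
          have hGm1 : G (-1) = (resolvent (cfc vf U) (-1 : ℂ) * (1 - cfc f U)) v := by
            simp only [hG_def, hw0_def, ContinuousLinearMap.mul_apply]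
          rw [hGm1, hVm1]
          simp only [ContinuousLinearMap.neg_apply, smul_neg]
  refine ⟨cfc f U, cfc b U, hstarQ, ?_, hfix, hB1, hUunit, hF2, hF3⟩
  intro x
  have h0 := congrArg (fun T : E →L[ℂ] E => T x) hU1Q
  simpa only [ContinuousLinearMap.mul_apply, ContinuousLinearMap.zero_apply] using h0

end PCAux

open PCAux in
/-- Let `U` be a unitary on `E = L²(∂Ω)` with spectral gap at `-1`, whose restriction
`U₊` to `Hs = H^{1/2}(∂Ω)` (embedded in `E` via `j`) is well defined, continuous, and
has pure point spectrum.  Then the partial Cayley transform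
`A_U = i P_{W⊥}(U - I)(U + I)⁻¹` and the orthogonal projection `P_W` onto
`W = ker (U + I)` leave `H^{1/2}` invariant and are continuous there; in particular `U`
is admissible. -/
theorem partialCayley_admissible {E Hs : Type*}
    [NormedAddCommGroup E] [InnerProductSpace ℂ E] [CompleteSpace E]
    [NormedAddCommGroup Hs] [InnerProductSpace ℂ Hs] [CompleteSpace Hs]
    -- the continuous embedding `H^{1/2} ⊆ L²`
    (j : Hs →L[ℂ] E) (hj : Function.Injective j)
    -- `U` unitary on `E`
    (U : E →L[ℂ] E) (hU : star U * U = 1 ∧ U * star U = 1)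
    -- `U` has spectral gap at `-1`
    (hgap : IsUnit (1 + U) ∨ ((-1 : ℂ) ∈ spectrum ℂ U ∧
      ∃ ε > (0 : ℝ), ∀ μ ∈ spectrum ℂ U, μ ≠ -1 → ε ≤ ‖μ + 1‖))
    -- the orthogonal projection `P_W` onto `W = ker (U + I)`
    (PW : E →L[ℂ] E)
    (hPW1 : ∀ x ∈ LinearMap.ker ((U + 1 : E →L[ℂ] E) : E →ₗ[ℂ] E), PW x = x)
    (hPW2 : ∀ x ∈ (LinearMap.ker ((U + 1 : E →L[ℂ] E) : E →ₗ[ℂ] E))ᗮ, PW x = 0)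
    -- the partial Cayley transform `A = i P_{W⊥}(U - I)(U + I)⁻¹`
    (A : E →L[ℂ] E)
    (hA : ∀ x : E, A ((U + 1) x) = Complex.I • ((1 - PW) ((U - 1) x)))
    (hAW : ∀ x ∈ LinearMap.ker ((U + 1 : E →L[ℂ] E) : E →ₗ[ℂ] E), A x = 0)
    -- the restriction `U₊` of `U` to `H^{1/2}`, continuous there
    (Us : Hs →L[ℂ] Hs) (hUs : ∀ x : Hs, j (Us x) = U (j x))
    -- `U₊` has pure point spectrum
    (hpp : spectrum ℂ Us = {μ : ℂ | ∃ x : Hs, x ≠ 0 ∧ Us x = μ • x}) :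
    (∃ As : Hs →L[ℂ] Hs, ∀ x : Hs, j (As x) = A (j x)) ∧
    (∃ Ps : Hs →L[ℂ] Hs, ∀ x : Hs, j (Ps x) = PW (j x)) := by
  have hUnormal : IsStarNormal U := ⟨hU.1.trans hU.2.symm⟩
  -- a uniform spectral gap
  obtain ⟨ε, hε, hε1, hgapε⟩ :
      ∃ ε : ℝ, 0 < ε ∧ ε ≤ 1 ∧ ∀ μ ∈ spectrum ℂ U, μ = -1 ∨ ε ≤ ‖μ + 1‖ := by
    rcases hgap with h1 | ⟨_, ε, hε, hg⟩
    · have hm1 : (-1 : ℂ) ∉ spectrum ℂ U := by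
        rw [spectrum.notMem_iff]
        have h2 : algebraMap ℂ (E →L[ℂ] E) (-1) - U = -(1 + U) := by
          rw [map_neg, map_one]; abel
        rw [h2]
        exact h1.neg
      by_cases hne : (spectrum ℂ U).Nonempty
      · refine ⟨min (Metric.infDist (-1 : ℂ) (spectrum ℂ U)) 1,
          ?_, min_le_right _ _, ?_⟩
        · exact lt_min (((spectrum.isClosed (𝕜 := ℂ) U).notMem_iff_infDist_pos hne).mp hm1)
            one_pos
        · intro μ hμ
          refine Or.inr (le_trans (min_le_left _ _) ?_)
          have h3 := Metric.infDist_le_dist_of_mem (x := (-1 : ℂ)) hμ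
          rwa [dist_eq_norm, show (-1 : ℂ) - μ = -(μ + 1) by ring, norm_neg] at h3
      · exact ⟨1, one_pos, le_refl 1, fun μ hμ => (hne ⟨μ, hμ⟩).elim⟩
    · refine ⟨min ε 1, lt_min hε one_pos, min_le_right _ _, fun μ hμ => ?_⟩
      by_cases h : μ = -1
      · exact Or.inl h
      · exact Or.inr (le_trans (min_le_left _ _) (hg μ hμ h))
  obtain ⟨Q, B, hstarQ, hQker, hQfix, hB1, hUunit, hF2, hF3⟩ := key U hUnormal hε hε1 hgapε
  -- Q agrees with PW
  have hK : IsClosed ((LinearMap.ker ((U + 1 : E →L[ℂ] E) : E →ₗ[ℂ] E) : Submodule ℂ E) : Set E) :=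
    ContinuousLinearMap.isClosed_ker (U + 1)
  haveI : CompleteSpace (LinearMap.ker ((U + 1 : E →L[ℂ] E) : E →ₗ[ℂ] E)) := hK.completeSpace_coe
  have hsup : LinearMap.ker ((U + 1 : E →L[ℂ] E) : E →ₗ[ℂ] E) ⊔ (LinearMap.ker ((U + 1 : E →L[ℂ] E) : E →ₗ[ℂ] E))ᗮ = ⊤ :=
    Submodule.sup_orthogonal_of_hasOrthogonalProjection
  have hQPW : ∀ v : E, Q v = PW v := by
    intro v
    have hv : v ∈ LinearMap.ker ((U + 1 : E →L[ℂ] E) : E →ₗ[ℂ] E) ⊔ (LinearMap.ker ((U + 1 : E →L[ℂ] E) : E →ₗ[ℂ] E))ᗮ := by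
      rw [hsup]; trivial
    obtain ⟨a, ha, c, hc, rfl⟩ := Submodule.mem_sup.mp hv
    have hQa : Q a = a := hQfix a (LinearMap.mem_ker.mp ha)
    have hadjQ : ContinuousLinearMap.adjoint Q = Q := by
      rw [← ContinuousLinearMap.star_eq_adjoint, hstarQ]
    have hQc : Q c = 0 := by
      have h1 : Q c ∈ LinearMap.ker ((U + 1 : E →L[ℂ] E) : E →ₗ[ℂ] E) := LinearMap.mem_ker.mpr (hQker c)
      have h2 : Q c ∈ (LinearMap.ker ((U + 1 : E →L[ℂ] E) : E →ₗ[ℂ] E))ᗮ := by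
        rw [Submodule.mem_orthogonal]
        intro u hu
        calc ⟪u, Q c⟫_ℂ = ⟪ContinuousLinearMap.adjoint Q u, c⟫_ℂ := by
              rw [ContinuousLinearMap.adjoint_inner_left]
          _ = ⟪Q u, c⟫_ℂ := by rw [hadjQ]
          _ = ⟪u, c⟫_ℂ := by rw [hQfix u (LinearMap.mem_ker.mp hu)]
          _ = 0 := (Submodule.mem_orthogonal _ c).mp hc u hu
      have h3 := (Submodule.orthogonal_disjoint (LinearMap.ker ((U + 1 : E →L[ℂ] E) : E →ₗ[ℂ] E))).le_bot
        (Submodule.mem_inf.mpr ⟨h1, h2⟩)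
      exact (Submodule.mem_bot ℂ).mp h3
    have hPWa : PW a = a := hPW1 a ha
    have hPWc : PW c = 0 := hPW2 c hc
    rw [map_add, map_add, hQa, hQc, hPWa, hPWc]
  -- A in terms of Q and B
  have hA_eq : ∀ v : E, A v = Complex.I • ((1 - Q) ((U - 1) (B v))) := by
    intro v
    have hdecomp : (U + 1) (B v) = v - Q v := by
      have h0 := congrArg (fun T : E →L[ℂ] E => T v) hB1
      simpa only [ContinuousLinearMap.mul_apply, ContinuousLinearMap.sub_apply,
        ContinuousLinearMap.one_apply] using h0
    have hQvker : Q v ∈ LinearMap.ker ((U + 1 : E →L[ℂ] E) : E →ₗ[ℂ] E) := LinearMap.mem_ker.mpr (hQker v)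
    have h1 : A v = A ((U + 1) (B v)) + A (Q v) := by
      rw [hdecomp, ← map_add]
      congr 1
      abel
    rw [h1, hA (B v), hAW (Q v) hQvker, add_zero]
    have h2 : (1 - PW) ((U - 1) (B v)) = (1 - Q) ((U - 1) (B v)) := by
      simp only [ContinuousLinearMap.sub_apply, ContinuousLinearMap.one_apply, hQPW]
    rw [h2]
  -- spectrum inclusion
  have hspec : spectrum ℂ Us ⊆ spectrum ℂ U := by
    intro μ hμ
    rw [hpp] at hμ
    obtain ⟨x, hx0, hx⟩ := hμ
    by_contra hcon
    rw [spectrum.notMem_iff] at hcon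
    obtain ⟨u, hu⟩ := hcon
    have hjx : (algebraMap ℂ (E →L[ℂ] E) μ - U) (j x) = 0 := by
      simp only [ContinuousLinearMap.sub_apply, Algebra.algebraMap_eq_smul_one,
        ContinuousLinearMap.smul_apply, ContinuousLinearMap.one_apply]
      rw [← hUs, hx, map_smul, sub_self]
    have h2 : ((u⁻¹ : (E →L[ℂ] E)ˣ) : E →L[ℂ] E) ((u : E →L[ℂ] E) (j x)) = j x := by
      rw [← ContinuousLinearMap.mul_apply, u.inv_mul, ContinuousLinearMap.one_apply]
    rw [hu, hjx, map_zero] at h2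
    exact hx0 (hj (show j x = j 0 by rw [← h2, map_zero]))
  have hsph : ∀ w ∈ sphere (-1:ℂ) (ε/2), ‖w + 1‖ = ε/2 := by
    intro w hw
    have h0 := mem_sphere_iff_norm.mp hw
    rwa [sub_neg_eq_add] at h0
  have hUsunit : ∀ w ∈ sphere (-1:ℂ) (ε/2), IsUnit (algebraMap ℂ (Hs →L[ℂ] Hs) w - Us) := by
    intro w hw
    have hwn : ‖w + 1‖ = ε/2 := hsph w hw
    have h1 : w ∉ spectrum ℂ U := by
      intro hcon
      rcases hgapε w hcon with rfl | h
      · rw [show (-1 : ℂ) + 1 = 0 by ring, norm_zero] at hwn; linarith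
      · rw [hwn] at h; linarith
    have h2 : w ∉ spectrum ℂ Us := fun hc => h1 (hspec hc)
    rwa [spectrum.notMem_iff] at h2
  -- intertwining of resolvents
  have hinter : ∀ w ∈ sphere (-1:ℂ) (ε/2), ∀ x : Hs,
      j (resolvent Us w x) = resolvent U w (j x) := by
    intro w hw x
    have hu1 : IsUnit (algebraMap ℂ (Hs →L[ℂ] Hs) w - Us) := hUsunit w hw
    have hu2 : IsUnit (algebraMap ℂ (E →L[ℂ] E) w - U) := hUunit w hw
    have hcomm : ∀ y : Hs, (algebraMap ℂ (E →L[ℂ] E) w - U) (j y)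
        = j ((algebraMap ℂ (Hs →L[ℂ] Hs) w - Us) y) := by
      intro y
      simp only [ContinuousLinearMap.sub_apply, Algebra.algebraMap_eq_smul_one,
        ContinuousLinearMap.smul_apply, ContinuousLinearMap.one_apply, map_sub, map_smul, hUs]
    have h1 : (algebraMap ℂ (Hs →L[ℂ] Hs) w - Us) (resolvent Us w x) = x := by
      have h0 := congrArg (fun T : Hs →L[ℂ] Hs => T x) (Ring.mul_inverse_cancel _ hu1)
      simpa only [ContinuousLinearMap.mul_apply, ContinuousLinearMap.one_apply, resolvent] using h0
    have h2 : ∀ y : E, resolvent U w ((algebraMap ℂ (E →L[ℂ] E) w - U) y) = y := by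
      intro y
      have h0 := congrArg (fun T : E →L[ℂ] E => T y) (Ring.inverse_mul_cancel _ hu2)
      simpa only [ContinuousLinearMap.mul_apply, ContinuousLinearMap.one_apply, resolvent] using h0
    rw [← h2 (j (resolvent Us w x)), hcomm, h1]
  -- continuity of the Hs-resolvent on the circle
  have hRcont : ContinuousOn (fun z => resolvent Us z) (sphere (-1:ℂ) (ε/2)) := by
    intro z hz
    have hz' : z ∈ resolventSet ℂ Us := spectrum.mem_resolventSet_iff.mpr (hUsunit z hz)
    exact ((spectrum.hasDerivAt_resolvent hz').differentiableAt).continuousAt.continuousWithinAt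
  have h2pin : (2 * Real.pi * Complex.I : ℂ) ≠ 0 := by
    simp [Real.pi_ne_zero, Complex.I_ne_zero]
  -- the projection on Hs
  set Ps : Hs →L[ℂ] Hs :=
    (2 * Real.pi * Complex.I : ℂ)⁻¹ • (∮ z in C(-1, ε/2), resolvent Us z) with hPs_def
  have hPs : ∀ x : Hs, j (Ps x) = PW (j x) := by
    intro x
    have h1 : (∮ z in C(-1, ε/2), resolvent Us z) x = ∮ z in C(-1, ε/2), resolvent Us z x :=
      circleIntegral_apply (by positivity) hRcont x
    have hx_cont : ContinuousOn (fun z => resolvent Us z x) (sphere (-1:ℂ) (ε/2)) :=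
      (ContinuousLinearMap.apply ℂ Hs x).continuous.comp_continuousOn hRcont
    have h2 : j (∮ z in C(-1, ε/2), resolvent Us z x)
        = ∮ z in C(-1, ε/2), j (resolvent Us z x) :=
      clm_circleIntegral j (by positivity) hx_cont
    have h3 : (∮ z in C(-1, ε/2), j (resolvent Us z x))
        = ∮ z in C(-1, ε/2), resolvent U z (j x) :=
      circleIntegral.integral_congr (by positivity) (fun z hz => hinter z hz x)
    calc j (Ps x) = (2 * Real.pi * Complex.I : ℂ)⁻¹ •
          j ((∮ z in C(-1, ε/2), resolvent Us z) x) := by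
          rw [hPs_def]
          simp only [ContinuousLinearMap.smul_apply, map_smul]
      _ = (2 * Real.pi * Complex.I : ℂ)⁻¹ • ((2 * Real.pi * Complex.I : ℂ) • Q (j x)) := by
          rw [h1, h2, h3, hF2 (j x)]
      _ = Q (j x) := by rw [smul_smul, inv_mul_cancel₀ h2pin, one_smul]
      _ = PW (j x) := hQPW _
  -- the "B" operator on Hs
  have hcont2 : ContinuousOn (fun z => (z+1)⁻¹ • (resolvent Us z * (1 - Ps)))
      (sphere (-1:ℂ) (ε/2)) := by
    refine ContinuousOn.fun_smul ?_ (hRcont.mul continuousOn_const)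
    refine ContinuousOn.inv₀ (by fun_prop) ?_
    intro z hz h0
    have := hsph z hz
    rw [h0, norm_zero] at this
    linarith
  set Bs : Hs →L[ℂ] Hs := -((2 * Real.pi * Complex.I : ℂ)⁻¹) •
    (∮ z in C(-1, ε/2), (z+1)⁻¹ • (resolvent Us z * (1 - Ps))) with hBs_def
  have hBs : ∀ x : Hs, j (Bs x) = B (j x) := by
    intro x
    have hj1P : j ((1 - Ps) x) = (1 - Q) (j x) := by
      simp only [ContinuousLinearMap.sub_apply, ContinuousLinearMap.one_apply, map_sub, hPs,
        ← hQPW]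
    have h1 : (∮ z in C(-1, ε/2), (z+1)⁻¹ • (resolvent Us z * (1 - Ps))) x
        = ∮ z in C(-1, ε/2), ((z+1)⁻¹ • (resolvent Us z * (1 - Ps))) x :=
      circleIntegral_apply (by positivity) hcont2 x
    have hx_cont : ContinuousOn (fun z => ((z+1)⁻¹ • (resolvent Us z * (1 - Ps))) x)
        (sphere (-1:ℂ) (ε/2)) :=
      (ContinuousLinearMap.apply ℂ Hs x).continuous.comp_continuousOn hcont2
    have h2 : j (∮ z in C(-1, ε/2), ((z+1)⁻¹ • (resolvent Us z * (1 - Ps))) x)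
        = ∮ z in C(-1, ε/2), j (((z+1)⁻¹ • (resolvent Us z * (1 - Ps))) x) :=
      clm_circleIntegral j (by positivity) hx_cont
    have h3 : (∮ z in C(-1, ε/2), j (((z+1)⁻¹ • (resolvent Us z * (1 - Ps))) x))
        = ∮ z in C(-1, ε/2), (z+1)⁻¹ • resolvent U z ((1 - Q) (j x)) := by
      refine circleIntegral.integral_congr (by positivity) (fun z hz => ?_)
      simp only [ContinuousLinearMap.smul_apply, ContinuousLinearMap.mul_apply, map_smul]
      rw [hinter z hz, hj1P]
    calc j (Bs x) = -((2 * Real.pi * Complex.I : ℂ)⁻¹) •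
          j ((∮ z in C(-1, ε/2), (z+1)⁻¹ • (resolvent Us z * (1 - Ps))) x) := by
          rw [hBs_def]
          simp only [ContinuousLinearMap.smul_apply, map_smul]
      _ = -((2 * Real.pi * Complex.I : ℂ)⁻¹) •
            (-((2 * Real.pi * Complex.I : ℂ) • B (j x))) := by
          rw [h1, h2, h3, hF3 (j x)]
      _ = B (j x) := by
          rw [neg_smul, smul_neg, neg_neg, smul_smul, inv_mul_cancel₀ h2pin, one_smul]
  refine ⟨⟨Complex.I • ((1 - Ps) * ((Us - 1) * Bs)), fun x => ?_⟩, ⟨Ps, hPs⟩⟩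
  have hjsub : ∀ y : Hs, j ((Us - 1) y) = (U - 1) (j y) := by
    intro y
    simp only [ContinuousLinearMap.sub_apply, ContinuousLinearMap.one_apply, map_sub, hUs]
  have hj1P : ∀ y : Hs, j ((1 - Ps) y) = (1 - Q) (j y) := by
    intro y
    simp only [ContinuousLinearMap.sub_apply, ContinuousLinearMap.one_apply, map_sub, hPs,
      ← hQPW]
  calc j ((Complex.I • ((1 - Ps) * ((Us - 1) * Bs))) x)
      = Complex.I • j ((1 - Ps) ((Us - 1) (Bs x))) := by
        simp only [ContinuousLinearMap.smul_apply, ContinuousLinearMap.mul_apply, map_smul]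
    _ = Complex.I • (1 - Q) ((U - 1) (j (Bs x))) := by rw [hj1P, hjsub]
    _ = Complex.I • (1 - Q) ((U - 1) (B (j x))) := by rw [hBs]
    _ = A (j x) := (hA_eq (j x)).symm
end
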